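/- arXiv:2511.14822 — 5 statements merged into one kernel-verified Lean document; each statement's English description precedes it below -/
import Mathlib

section
/- (Weak Hohenberg–Kohn theorem.) Let v, v' ∈ V and ρ ∈ V*. Suppose there exist a pure ground state Γ of ι(v)+W with ι*(Γ) = ρ and a pure ground state Γ' of ι(v')+W with ι*(Γ') = ρ. Then every pure ground state of ι(v)+W whose density is ρ is also a ground state of ι(v')+W, and conversely every pure ground state of ι(v')+W whose density is ρ is also a ground state of ι(v)+W. -/
open Filter Topology

noncomputable section

variable {V H : Type*}
  [AddCommGroup V] [Module ℝ V]
  [NormedAddCommGroup H] [InnerProductSpace ℂ H]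

/-- The real expectation value `⟨ψ, T ψ⟩` of an operator `T` in the vector `ψ`. -/
def expectation (T : H →ₗ[ℂ] H) (ψ : H) : ℝ := (inner ℂ ψ (T ψ) : ℂ).re

/-- The ground state energy of the Hamiltonian `ι v + W`. -/
def energy (ι : V →ₗ[ℝ] (H →ₗ[ℂ] H)) (W : H →ₗ[ℂ] H) (v : V) : ℝ :=
  sInf {r : ℝ | ∃ ψ : H, ‖ψ‖ = 1 ∧ r = expectation (ι v + W) ψ}

/-- The density `ι*(|ψ⟩⟨ψ|)` of the pure state given by the unit vector `ψ`,
as an element of the dual space `V*`. -/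
def pureDensity (ι : V →ₗ[ℝ] (H →ₗ[ℂ] H)) (ψ : H) : Module.Dual ℝ V where
  toFun v := expectation (ι v) ψ
  map_add' v w := by simp [expectation, inner_add_right]
  map_smul' c v := by
    simp only [map_smul, LinearMap.smul_apply, expectation, RingHom.id_apply, smul_eq_mul]
    rw [← algebraMap_smul ℂ c ((ι v) ψ), Complex.coe_algebraMap, inner_smul_right]
    simp

/-- An ensemble state: a positive semidefinite operator of unit trace. -/
def IsEnsembleState (Γ : H →ₗ[ℂ] H) : Prop :=
  Γ.IsSymmetric ∧ (∀ x : H, 0 ≤ (inner ℂ x (Γ x) : ℂ).re) ∧ LinearMap.trace ℂ H Γ = 1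

/-- The density `ι*(Γ)` of a state `Γ`, `v ↦ Tr(Γ ι(v))`, as an element of `V*`. -/
def traceDensity (ι : V →ₗ[ℝ] (H →ₗ[ℂ] H)) (Γ : H →ₗ[ℂ] H) : Module.Dual ℝ V where
  toFun v := (LinearMap.trace ℂ H (ι v ∘ₗ Γ)).re
  map_add' v w := by simp [map_add, LinearMap.add_comp]
  map_smul' c v := by
    simp only [map_smul, RingHom.id_apply, smul_eq_mul]
    rw [← algebraMap_smul ℂ c (ι v), LinearMap.smul_comp, map_smul, Complex.coe_algebraMap]
    simp

/-- The pure (Levy–Lieb) universal functional `F_p`. -/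
def Fp (ι : V →ₗ[ℝ] (H →ₗ[ℂ] H)) (W : H →ₗ[ℂ] H) (ρ : Module.Dual ℝ V) : ℝ :=
  sInf {r : ℝ | ∃ ψ : H, ‖ψ‖ = 1 ∧ pureDensity ι ψ = ρ ∧ r = expectation W ψ}

/-- The ensemble (Lieb/Valone) universal functional `F_e`. -/
def Fe (ι : V →ₗ[ℝ] (H →ₗ[ℂ] H)) (W : H →ₗ[ℂ] H) (ρ : Module.Dual ℝ V) : ℝ :=
  sInf {r : ℝ | ∃ Γ : H →ₗ[ℂ] H, IsEnsembleState Γ ∧ traceDensity ι Γ = ρ ∧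
    r = (LinearMap.trace ℂ H (W ∘ₗ Γ)).re}

/-- The weight space of a functional `α ∈ V*`. -/
def weightSpace (ι : V →ₗ[ℝ] (H →ₗ[ℂ] H)) (α : Module.Dual ℝ V) : Submodule ℂ H where
  carrier := {ψ : H | ∀ v : V, ι v ψ = (α v : ℂ) • ψ}
  add_mem' := by
    intro a b ha hb v
    rw [map_add, ha v, hb v, smul_add]
  zero_mem' := by intro v; simp
  smul_mem' := by
    intro c x hx v
    rw [LinearMap.map_smul, hx v, smul_comm]

/-- The set of weights of an abelian functional theory. -/
def weights (ι : V →ₗ[ℝ] (H →ₗ[ℂ] H)) : Set (Module.Dual ℝ V) :=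
  {α : Module.Dual ℝ V | weightSpace ι α ≠ ⊥}

/-- The derivative of the density map along the set of pure states at `|Ψ⟩⟨Ψ|`,
applied to the tangent vector `φ ⊥ Ψ`: the functional `v ↦ 2 Re⟨φ, ι(v)Ψ⟩`. -/
def derivDensity (ι : V →ₗ[ℝ] (H →ₗ[ℂ] H)) (Ψ φ : H) : Module.Dual ℝ V where
  toFun v := 2 * (inner ℂ φ (ι v Ψ) : ℂ).re
  map_add' v w := by simp [inner_add_right]; ring
  map_smul' c v := by
    simp only [map_smul, LinearMap.smul_apply, RingHom.id_apply, smul_eq_mul]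
    rw [← algebraMap_smul ℂ c ((ι v) Ψ), Complex.coe_algebraMap, inner_smul_right]
    simp; ring

/-- `ρ` is a relative interior point of the convex set `C` (i.e. an interior point
of `C` within its affine span): every point of `C` lies on a segment inside `C`
having `ρ` in its (open) interior. -/
def IsRelInterior {M : Type*} [AddCommGroup M] [Module ℝ M] (C : Set M) (ρ : M) : Prop :=
  ρ ∈ C ∧ ∀ σ ∈ C, ∃ τ ∈ C, ∃ t : ℝ, 0 < t ∧ t < 1 ∧ ρ = t • σ + (1 - t) • τ

/-- Strong orthogonality: componentwise orthogonality in every weight space. -/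
def StronglyOrthogonal [FiniteDimensional ℂ H] (ι : V →ₗ[ℝ] (H →ₗ[ℂ] H)) (Φ Φ' : H) : Prop :=
  ∀ α : Module.Dual ℝ V, weightSpace ι α ≠ ⊥ →
    (inner ℂ (Submodule.orthogonalProjectionOnto (weightSpace ι α) Φ)
        (Submodule.orthogonalProjectionOnto (weightSpace ι α) Φ') : ℂ) = 0

/-- The `k`-convex hull of a set. -/
def convk {M : Type*} [AddCommGroup M] [Module ℝ M] (k : ℕ) (X : Set M) : Set M :=
  {ρ : M | ∃ (t : Fin k → ℝ) (x : Fin k → M),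
    (∀ i, 0 ≤ t i) ∧ (∑ i, t i) = 1 ∧ (∀ i, x i ∈ X) ∧ (∑ i, t i • x i) = ρ}

/-- The operator `A ⊗ id` on `H ⊗ ℂᵏ ≅ H ⊕ ⋯ ⊕ H` (k summands). -/
def opBar (k : ℕ) (A : H →ₗ[ℂ] H) :
    (PiLp 2 fun _ : Fin k => H) →ₗ[ℂ] (PiLp 2 fun _ : Fin k => H) where
  toFun x := WithLp.toLp 2 (fun i => A (x i))
  map_add' x y := by ext i; simp [PiLp.add_apply]
  map_smul' c x := by ext i; simp [PiLp.smul_apply]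

/-- The potential map `v ↦ ι(v) ⊗ id` of the `k`-convexified functional theory. -/
def potBar (k : ℕ) (ι : V →ₗ[ℝ] (H →ₗ[ℂ] H)) :
    V →ₗ[ℝ] ((PiLp 2 fun _ : Fin k => H) →ₗ[ℂ] (PiLp 2 fun _ : Fin k => H)) where
  toFun v := opBar k (ι v)
  map_add' v w := by
    apply LinearMap.ext; intro x; ext i
    simp [opBar, map_add]
  map_smul' c v := by
    apply LinearMap.ext; intro x; ext i
    simp [opBar, map_smul]

/-- The subspace of potentials mapped to real multiples of the identity operator. -/
def scalarPart (ι : V →ₗ[ℝ] (H →ₗ[ℂ] H)) : Submodule ℝ V where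
  carrier := {v : V | ∃ c : ℝ, ι v = c • (LinearMap.id : H →ₗ[ℂ] H)}
  add_mem' := by
    rintro a b ⟨c, hc⟩ ⟨d, hd⟩
    exact ⟨c + d, by rw [map_add, hc, hd, add_smul]⟩
  zero_mem' := ⟨0, by simp⟩
  smul_mem' := by
    rintro a v ⟨c, hc⟩
    exact ⟨a * c, by rw [map_smul, hc, smul_smul]⟩

lemma expectation_add (T S : H →ₗ[ℂ] H) (ψ : H) :
    expectation (T + S) ψ = expectation T ψ + expectation S ψ := by
  simp [expectation, inner_add_right]

lemma energy_le [FiniteDimensional ℂ H] (ι : V →ₗ[ℝ] (H →ₗ[ℂ] H)) (W : H →ₗ[ℂ] H)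
    (v : V) (ψ : H) (hψ : ‖ψ‖ = 1) :
    energy ι W v ≤ expectation (ι v + W) ψ := by
  apply csInf_le
  · refine ⟨-‖LinearMap.toContinuousLinearMap (ι v + W)‖, ?_⟩
    rintro r ⟨φ, hφ, rfl⟩
    set T := LinearMap.toContinuousLinearMap (ι v + W)
    have h1 : |expectation (ι v + W) φ| ≤ ‖T‖ := by
      have : |((inner ℂ φ (T φ) : ℂ)).re| ≤ ‖(inner ℂ φ (T φ) : ℂ)‖ := Complex.abs_re_le_norm _
      refine le_trans this ?_
      calc ‖(inner ℂ φ (T φ) : ℂ)‖ ≤ ‖φ‖ * ‖T φ‖ := norm_inner_le_norm _ _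
        _ ≤ ‖φ‖ * (‖T‖ * ‖φ‖) := by
            exact mul_le_mul_of_nonneg_left (T.le_opNorm φ) (norm_nonneg φ)
        _ = ‖T‖ := by rw [hφ]; ring
    exact (abs_le.mp h1).1
  · exact ⟨ψ, hψ, rfl⟩

lemma expectation_shift (ι : V →ₗ[ℝ] (H →ₗ[ℂ] H)) (W : H →ₗ[ℂ] H)
    (v v' : V) (ψ : H) :
    expectation (ι v' + W) ψ
      = expectation (ι v + W) ψ + (pureDensity ι ψ v' - pureDensity ι ψ v) := by
  have h : ∀ w : V, pureDensity ι ψ w = expectation (ι w) ψ := fun _ => rfl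
  rw [expectation_add, expectation_add, h, h]
  ring

/-- the weak Hohenberg–Kohn theorem. -/
theorem weak_hohenberg_kohn [FiniteDimensional ℝ V] [FiniteDimensional ℂ H] [Nontrivial H]
    (ι : V →ₗ[ℝ] (H →ₗ[ℂ] H)) (W : H →ₗ[ℂ] H)
    (hι : ∀ v : V, (ι v).IsSymmetric) (hW : W.IsSymmetric)
    (v v' : V) (ρ : Module.Dual ℝ V)
    (h : ∃ ψ : H, ‖ψ‖ = 1 ∧ expectation (ι v + W) ψ = energy ι W v ∧ pureDensity ι ψ = ρ)
    (h' : ∃ ψ : H, ‖ψ‖ = 1 ∧ expectation (ι v' + W) ψ = energy ι W v' ∧ pureDensity ι ψ = ρ) :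
    (∀ ψ : H, ‖ψ‖ = 1 → expectation (ι v + W) ψ = energy ι W v → pureDensity ι ψ = ρ →
      expectation (ι v' + W) ψ = energy ι W v') ∧
    (∀ ψ : H, ‖ψ‖ = 1 → expectation (ι v' + W) ψ = energy ι W v' → pureDensity ι ψ = ρ →
      expectation (ι v + W) ψ = energy ι W v) := by
  obtain ⟨ψ₀, hψ₀n, hψ₀e, hψ₀d⟩ := h
  obtain ⟨φ₀, hφ₀n, hφ₀e, hφ₀d⟩ := h'
  constructor
  · intro ψ hn he hd
    have h1 := energy_le ι W v' ψ hn
    have h2 := expectation_shift ι W v v' ψ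
    have h3 := expectation_shift ι W v v' φ₀
    have h4 := energy_le ι W v φ₀ hφ₀n
    rw [hd] at h2
    rw [hφ₀d] at h3
    rw [hφ₀e] at h3
    linarith
  · intro ψ hn he hd
    have h1 := energy_le ι W v ψ hn
    have h2 := expectation_shift ι W v' v ψ
    have h3 := expectation_shift ι W v' v ψ₀
    have h4 := energy_le ι W v' ψ₀ hψ₀n
    rw [hd] at h2
    rw [hψ₀d] at h3
    rw [hψ₀e] at h3
    linarith

end
end

section
/- The ensemble functional F_e is convex on its domain: for all ρ₁, ρ₂ ∈ ι*(E) and t ∈ [0,1], one has t ρ₁ + (1−t) ρ₂ ∈ ι*(E) and F_e(t ρ₁ + (1−t) ρ₂) ≤ t F_e(ρ₁) + (1−t) F_e(ρ₂). -/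
open Filter Topology

noncomputable section

variable {V H : Type*}
  [AddCommGroup V] [Module ℝ V]
  [NormedAddCommGroup H] [InnerProductSpace ℂ H]

section AuxFeConvex

variable [FiniteDimensional ℂ H]

lemma trace_eq_sum_inner' {n : ℕ}
    (b : OrthonormalBasis (Fin n) ℂ H) (T : H →ₗ[ℂ] H) :
    LinearMap.trace ℂ H T = ∑ i, (inner ℂ (b i) (T (b i)) : ℂ) := by
  rw [LinearMap.trace_eq_matrix_trace ℂ b.toBasis, Matrix.trace]
  congr 1
  ext i
  rw [Matrix.diag_apply, LinearMap.toMatrix_apply, OrthonormalBasis.coe_toBasis,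
    OrthonormalBasis.coe_toBasis_repr_apply, OrthonormalBasis.repr_apply_apply]

lemma trace_comp_re_ge (W Γ : H →ₗ[ℂ] H)
    (hΓs : Γ.IsSymmetric) (hpos : ∀ x : H, 0 ≤ (inner ℂ x (Γ x) : ℂ).re)
    (htr : LinearMap.trace ℂ H Γ = 1) :
    -‖(LinearMap.toContinuousLinearMap W)‖ ≤ (LinearMap.trace ℂ H (W ∘ₗ Γ)).re := by
  set n := Module.finrank ℂ H
  set b := hΓs.eigenvectorBasis rfl with hbdef
  set μ := hΓs.eigenvalues (n := n) rfl with hμdef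
  have hb : ∀ i, Γ (b i) = (μ i : ℂ) • b i := fun i =>
    (hΓs.hasEigenvector_eigenvectorBasis rfl i).apply_eq_smul
  have hnorm : ∀ i, ‖b i‖ = 1 := fun i => b.orthonormal.1 i
  have hib : ∀ i, (inner ℂ (b i) (b i) : ℂ) = 1 := fun i => by
    rw [inner_self_eq_norm_sq_to_K, hnorm]; norm_num
  have hμ0 : ∀ i, 0 ≤ μ i := by
    intro i
    have := hpos (b i)
    rwa [hb i, inner_smul_right, hib, mul_one, Complex.ofReal_re] at this
  have hsum : ∑ i, μ i = 1 := by
    have h1 : (LinearMap.trace ℂ H Γ) = ∑ i, (μ i : ℂ) := by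
      rw [trace_eq_sum_inner' b]
      congr 1; ext i
      rw [hb i, inner_smul_right, hib, mul_one]
    rw [htr] at h1
    exact_mod_cast h1.symm
  set C := ‖(LinearMap.toContinuousLinearMap W)‖ with hC
  have hWb : ∀ i, -C ≤ (inner ℂ (b i) (W (b i)) : ℂ).re := by
    intro i
    have habs : ‖(inner ℂ (b i) (W (b i)) : ℂ)‖ ≤ C := by
      calc ‖(inner ℂ (b i) (W (b i)) : ℂ)‖ ≤ ‖b i‖ * ‖W (b i)‖ :=
            norm_inner_le_norm _ _
        _ ≤ 1 * (C * 1) := by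
            rw [hnorm]
            have := (LinearMap.toContinuousLinearMap W).le_opNorm (b i)
            rw [LinearMap.coe_toContinuousLinearMap', ← hC, hnorm i] at this
            simpa using mul_le_mul_of_nonneg_left this zero_le_one
        _ = C := by ring
    have h2 : |(inner ℂ (b i) (W (b i)) : ℂ).re| ≤ C :=
      le_trans (Complex.abs_re_le_norm _) (by simpa using habs)
    linarith [(abs_le.mp h2).1]
  have key : (LinearMap.trace ℂ H (W ∘ₗ Γ)).re = ∑ i, μ i * (inner ℂ (b i) (W (b i)) : ℂ).re := by
    rw [trace_eq_sum_inner' b, Complex.re_sum]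
    congr 1; ext i
    rw [LinearMap.comp_apply, hb i, map_smul, inner_smul_right]
    simp [Complex.ofReal_mul, Complex.mul_re]
  rw [key]
  calc -C = ∑ i, μ i * (-C) := by rw [← Finset.sum_mul, hsum]; ring
    _ ≤ ∑ i, μ i * (inner ℂ (b i) (W (b i)) : ℂ).re :=
        Finset.sum_le_sum fun i _ => mul_le_mul_of_nonneg_left (hWb i) (hμ0 i)

lemma mix_trace_re (A Γ₁ Γ₂ : H →ₗ[ℂ] H) (t : ℝ) :
    (LinearMap.trace ℂ H (A ∘ₗ (((t : ℝ) : ℂ) • Γ₁ + (((1 - t : ℝ)) : ℂ) • Γ₂))).re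
      = t * (LinearMap.trace ℂ H (A ∘ₗ Γ₁)).re
        + (1 - t) * (LinearMap.trace ℂ H (A ∘ₗ Γ₂)).re := by
  rw [LinearMap.comp_add, LinearMap.comp_smul, LinearMap.comp_smul, map_add, map_smul, map_smul]
  simp [Complex.add_re, Complex.mul_re]

lemma mix_isEnsembleState (Γ₁ Γ₂ : H →ₗ[ℂ] H)
    (h₁ : IsEnsembleState Γ₁) (h₂ : IsEnsembleState Γ₂)
    (t : ℝ) (ht₀ : 0 ≤ t) (ht₁ : t ≤ 1) :
    IsEnsembleState (((t : ℝ) : ℂ) • Γ₁ + (((1 - t : ℝ)) : ℂ) • Γ₂) := by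
  obtain ⟨hs₁, hp₁, htr₁⟩ := h₁
  obtain ⟨hs₂, hp₂, htr₂⟩ := h₂
  refine ⟨fun x y => ?_, fun x => ?_, ?_⟩
  · simp only [LinearMap.add_apply, LinearMap.smul_apply, inner_add_left, inner_add_right,
      inner_smul_left, inner_smul_right, Complex.conj_ofReal, hs₁ x y, hs₂ x y]
  · have h1 := hp₁ x
    have h2 := hp₂ x
    simp only [LinearMap.add_apply, LinearMap.smul_apply, inner_add_right, inner_smul_right,
      Complex.add_re, Complex.mul_re, Complex.ofReal_re, Complex.ofReal_im, zero_mul, sub_zero]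
    nlinarith
  · rw [map_add, map_smul, map_smul, htr₁, htr₂, smul_eq_mul, smul_eq_mul, mul_one, mul_one]
    push_cast; ring

lemma mix_traceDensity (ι : V →ₗ[ℝ] (H →ₗ[ℂ] H)) (Γ₁ Γ₂ : H →ₗ[ℂ] H) (t : ℝ) :
    traceDensity ι (((t : ℝ) : ℂ) • Γ₁ + (((1 - t : ℝ)) : ℂ) • Γ₂)
      = t • traceDensity ι Γ₁ + (1 - t) • traceDensity ι Γ₂ := by
  apply LinearMap.ext; intro v
  have := mix_trace_re (ι v) Γ₁ Γ₂ t
  simpa [traceDensity] using this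

end AuxFeConvex

/-- convexity of the ensemble functional on its domain. -/
theorem Fe_convex [FiniteDimensional ℝ V] [FiniteDimensional ℂ H] [Nontrivial H]
    (ι : V →ₗ[ℝ] (H →ₗ[ℂ] H)) (W : H →ₗ[ℂ] H)
    (hι : ∀ v : V, (ι v).IsSymmetric) (hW : W.IsSymmetric)
    (ρ₁ ρ₂ : Module.Dual ℝ V)
    (h₁ : ∃ Γ : H →ₗ[ℂ] H, IsEnsembleState Γ ∧ traceDensity ι Γ = ρ₁)
    (h₂ : ∃ Γ : H →ₗ[ℂ] H, IsEnsembleState Γ ∧ traceDensity ι Γ = ρ₂)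
    (t : ℝ) (ht₀ : 0 ≤ t) (ht₁ : t ≤ 1) :
    (∃ Γ : H →ₗ[ℂ] H, IsEnsembleState Γ ∧ traceDensity ι Γ = t • ρ₁ + (1 - t) • ρ₂) ∧
    Fe ι W (t • ρ₁ + (1 - t) • ρ₂) ≤ t * Fe ι W ρ₁ + (1 - t) * Fe ι W ρ₂ := by
  obtain ⟨Γ₁, hΓ₁, hρ₁⟩ := h₁
  obtain ⟨Γ₂, hΓ₂, hρ₂⟩ := h₂
  have hmixd : ∀ Γa Γb : H →ₗ[ℂ] H, traceDensity ι Γa = ρ₁ → traceDensity ι Γb = ρ₂ →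
      traceDensity ι (((t : ℝ) : ℂ) • Γa + (((1 - t : ℝ)) : ℂ) • Γb)
        = t • ρ₁ + (1 - t) • ρ₂ := by
    intro Γa Γb ha hb
    rw [mix_traceDensity, ha, hb]
  constructor
  · exact ⟨_, mix_isEnsembleState Γ₁ Γ₂ hΓ₁ hΓ₂ t ht₀ ht₁, hmixd Γ₁ Γ₂ hρ₁ hρ₂⟩
  · set S₁ := {r : ℝ | ∃ Γ : H →ₗ[ℂ] H, IsEnsembleState Γ ∧ traceDensity ι Γ = ρ₁ ∧
      r = (LinearMap.trace ℂ H (W ∘ₗ Γ)).re} with hS₁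
    set S₂ := {r : ℝ | ∃ Γ : H →ₗ[ℂ] H, IsEnsembleState Γ ∧ traceDensity ι Γ = ρ₂ ∧
      r = (LinearMap.trace ℂ H (W ∘ₗ Γ)).re} with hS₂
    set S := {r : ℝ | ∃ Γ : H →ₗ[ℂ] H, IsEnsembleState Γ ∧
      traceDensity ι Γ = t • ρ₁ + (1 - t) • ρ₂ ∧
      r = (LinearMap.trace ℂ H (W ∘ₗ Γ)).re} with hS
    have hbdd : BddBelow S := by
      refine ⟨-‖(LinearMap.toContinuousLinearMap W)‖, ?_⟩
      rintro r ⟨Γ, hΓ, -, rfl⟩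
      exact trace_comp_re_ge W Γ hΓ.1 hΓ.2.1 hΓ.2.2
    have hne₁ : S₁.Nonempty := ⟨_, Γ₁, hΓ₁, hρ₁, rfl⟩
    have hne₂ : S₂.Nonempty := ⟨_, Γ₂, hΓ₂, hρ₂, rfl⟩
    show sInf S ≤ t * sInf S₁ + (1 - t) * sInf S₂
    refine le_of_forall_pos_le_add ?_
    intro ε hε
    obtain ⟨a, ⟨Γa, hΓa, hda, rfl⟩, ha⟩ := Real.lt_sInf_add_pos hne₁ hε
    obtain ⟨b, ⟨Γb, hΓb, hdb, rfl⟩, hb⟩ := Real.lt_sInf_add_pos hne₂ hε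
    have hmem : t * (LinearMap.trace ℂ H (W ∘ₗ Γa)).re
        + (1 - t) * (LinearMap.trace ℂ H (W ∘ₗ Γb)).re ∈ S := by
      exact ⟨_, mix_isEnsembleState Γa Γb hΓa hΓb t ht₀ ht₁, hmixd Γa Γb hda hdb,
        (mix_trace_re W Γa Γb t).symm⟩
    have h1 : sInf S ≤ t * (LinearMap.trace ℂ H (W ∘ₗ Γa)).re
        + (1 - t) * (LinearMap.trace ℂ H (W ∘ₗ Γb)).re := csInf_le hbdd hmem
    nlinarith [mul_le_mul_of_nonneg_left (le_of_lt ha) ht₀,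
      mul_le_mul_of_nonneg_left (le_of_lt hb) (by linarith : (0:ℝ) ≤ 1 - t)]

end
end

section
/- (Dimension of the set of ensemble-representable densities.) The affine span of ι*(E) in V* has dimension equal to dim V − dim { v ∈ V : ι(v) is a real scalar multiple of the identity operator on H }. In particular, the affine span of ι*(E) is all of V* if and only if ι is injective and no nonzero v ∈ V satisfies ι(v) ∈ ℝ·id_H. -/
open Filter Topology

noncomputable section

variable {V H : Type*}
  [AddCommGroup V] [Module ℝ V]
  [NormedAddCommGroup H] [InnerProductSpace ℂ H]

section AuxRankOne

variable [FiniteDimensional ℂ H]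

set_option linter.unusedSectionVars false

/-- The rank-one operator `|ψ⟩⟨ψ|`. -/
def rankOneOp (ψ : H) : H →ₗ[ℂ] H where
  toFun x := (inner ℂ ψ x : ℂ) • ψ
  map_add' x y := by simp [inner_add_right, add_smul]
  map_smul' c x := by simp [inner_smul_right, smul_smul]

lemma trace_eq_sum_inner_aux (f : H →ₗ[ℂ] H) :
    LinearMap.trace ℂ H f
      = ∑ i, (inner ℂ (stdOrthonormalBasis ℂ H i) (f (stdOrthonormalBasis ℂ H i)) : ℂ) := by
  set b := stdOrthonormalBasis ℂ H
  rw [LinearMap.trace_eq_matrix_trace ℂ b.toBasis, Matrix.trace]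
  refine Finset.sum_congr rfl fun i _ => ?_
  rw [Matrix.diag_apply, LinearMap.toMatrix_apply, b.coe_toBasis_repr_apply,
    b.repr_apply_apply, b.coe_toBasis]

lemma trace_comp_rankOne (A : H →ₗ[ℂ] H) (ψ : H) :
    LinearMap.trace ℂ H (A ∘ₗ rankOneOp ψ) = (inner ℂ ψ (A ψ) : ℂ) := by
  rw [trace_eq_sum_inner_aux]
  set b := stdOrthonormalBasis ℂ H
  have : ∀ i, (inner ℂ (b i) ((A ∘ₗ rankOneOp ψ) (b i)) : ℂ)
      = (inner ℂ ψ (b i) : ℂ) * (inner ℂ (b i) (A ψ) : ℂ) := by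
    intro i
    simp [rankOneOp, LinearMap.comp_apply, map_smul, inner_smul_right]
  rw [Finset.sum_congr rfl fun i _ => this i]
  calc (∑ i, (inner ℂ ψ (b i) : ℂ) * (inner ℂ (b i) (A ψ) : ℂ))
      = (inner ℂ (∑ i, (inner ℂ (b i) ψ : ℂ) • b i) (A ψ) : ℂ) := by
        rw [sum_inner]
        refine Finset.sum_congr rfl fun i _ => ?_
        rw [inner_smul_left, inner_conj_symm]
    _ = (inner ℂ ψ (A ψ) : ℂ) := by rw [b.sum_repr']

lemma isEnsembleState_rankOne (ψ : H) (h : ‖ψ‖ = 1) : IsEnsembleState (rankOneOp ψ) := by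
  refine ⟨?_, ?_, ?_⟩
  · intro x y
    show (inner ℂ ((inner ℂ ψ x : ℂ) • ψ) y : ℂ) = (inner ℂ x ((inner ℂ ψ y : ℂ) • ψ) : ℂ)
    rw [inner_smul_left, inner_smul_right, inner_conj_symm]
    ring
  · intro x
    show 0 ≤ (inner ℂ x ((inner ℂ ψ x : ℂ) • ψ) : ℂ).re
    rw [inner_smul_right, ← inner_conj_symm x ψ, Complex.mul_conj, Complex.ofReal_re]
    exact Complex.normSq_nonneg _
  · have := trace_comp_rankOne (LinearMap.id : H →ₗ[ℂ] H) ψ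
    rw [LinearMap.id_comp] at this
    rw [this]
    simp [inner_self_eq_norm_sq_to_K, h]

lemma traceDensity_rankOne {V : Type*} [AddCommGroup V] [Module ℝ V]
    (ι : V →ₗ[ℝ] (H →ₗ[ℂ] H)) (ψ : H) (v : V) :
    traceDensity ι (rankOneOp ψ) v = (inner ℂ ψ (ι v ψ) : ℂ).re := by
  show (LinearMap.trace ℂ H (ι v ∘ₗ rankOneOp ψ)).re = _
  rw [trace_comp_rankOne]

end AuxRankOne


/-- dimension of the set of ensemble-representable densities. -/
theorem dim_ensemble_representable [FiniteDimensional ℝ V] [FiniteDimensional ℂ H] [Nontrivial H]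
    (ι : V →ₗ[ℝ] (H →ₗ[ℂ] H)) (W : H →ₗ[ℂ] H)
    (hι : ∀ v : V, (ι v).IsSymmetric) (hW : W.IsSymmetric) :
    Module.finrank ℝ (affineSpan ℝ {σ : Module.Dual ℝ V |
        ∃ Γ : H →ₗ[ℂ] H, IsEnsembleState Γ ∧ traceDensity ι Γ = σ}).direction
      = Module.finrank ℝ V - Module.finrank ℝ (scalarPart ι) ∧
    (affineSpan ℝ {σ : Module.Dual ℝ V |
        ∃ Γ : H →ₗ[ℂ] H, IsEnsembleState Γ ∧ traceDensity ι Γ = σ} = ⊤ ↔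
      Function.Injective ι ∧
        ∀ v : V, v ≠ 0 → ¬∃ c : ℝ, ι v = c • (LinearMap.id : H →ₗ[ℂ] H)) := by
  classical
  set D : Set (Module.Dual ℝ V) := {σ : Module.Dual ℝ V |
      ∃ Γ : H →ₗ[ℂ] H, IsEnsembleState Γ ∧ traceDensity ι Γ = σ} with hDdef
  obtain ⟨x0, hx0⟩ := exists_ne (0 : H)
  set ψ0 : H := ((‖x0‖⁻¹ : ℝ) : ℂ) • x0 with hψ0def
  have hx0n : ‖x0‖ ≠ 0 := norm_ne_zero_iff.2 hx0
  have hψ0 : ‖ψ0‖ = 1 := by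
    rw [hψ0def, norm_smul, Complex.norm_real, Real.norm_eq_abs,
      abs_of_nonneg (inv_nonneg.2 (norm_nonneg x0)), inv_mul_cancel₀ hx0n]
  have key : ∀ ψ : H, ‖ψ‖ = 1 → traceDensity ι (rankOneOp ψ) ∈ D :=
    fun ψ h => ⟨rankOneOp ψ, isEnsembleState_rankOne ψ h, rfl⟩
  set S : Submodule ℝ (Module.Dual ℝ V) := (affineSpan ℝ D).direction with hSdef
  have hSdir : S = vectorSpan ℝ D := direction_affineSpan ℝ D
  -- coannihilator of S is contained in scalarPart
  have hcoann : S.dualCoannihilator ≤ scalarPart ι := by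
    intro v hv
    rw [Submodule.mem_dualCoannihilator] at hv
    set c : ℝ := (inner ℂ ψ0 (ι v ψ0) : ℂ).re with hcdef
    have hconst : ∀ ψ : H, ‖ψ‖ = 1 → (inner ℂ ψ (ι v ψ) : ℂ).re = c := by
      intro ψ h
      have hmem : traceDensity ι (rankOneOp ψ) -ᵥ traceDensity ι (rankOneOp ψ0) ∈ S := by
        rw [hSdir]; exact vsub_mem_vectorSpan ℝ (key ψ h) (key ψ0 hψ0)
      have h0 := hv _ hmem
      rw [vsub_eq_sub, LinearMap.sub_apply, traceDensity_rankOne, traceDensity_rankOne,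
        sub_eq_zero] at h0
      exact h0
    have hreal : ∀ ψ : H, ‖ψ‖ = 1 → (inner ℂ ψ (ι v ψ) : ℂ) = (c : ℂ) := by
      intro ψ h
      have hsym : (starRingEnd ℂ) (inner ℂ ψ (ι v ψ) : ℂ) = (inner ℂ ψ (ι v ψ) : ℂ) := by
        rw [inner_conj_symm]; exact hι v ψ ψ
      rw [Complex.conj_eq_iff_re] at hsym
      rw [← hsym, hconst ψ h]
    have h1 : ∀ x : H, (inner ℂ x (ι v x) : ℂ) = (c : ℂ) * ((‖x‖ : ℂ))^2 := by
      intro x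
      rcases eq_or_ne x 0 with rfl | hx
      · simp
      · have hr : ‖x‖ ≠ 0 := norm_ne_zero_iff.2 hx
        set ψ : H := ((‖x‖⁻¹ : ℝ) : ℂ) • x with hψdef
        have hψ : ‖ψ‖ = 1 := by
          rw [hψdef, norm_smul, Complex.norm_real, Real.norm_eq_abs,
            abs_of_nonneg (inv_nonneg.2 (norm_nonneg x)), inv_mul_cancel₀ hr]
        have hxψ : x = ((‖x‖ : ℝ) : ℂ) • ψ := by
          rw [hψdef, smul_smul, ← Complex.ofReal_mul, mul_inv_cancel₀ hr]
          simp
        calc (inner ℂ x (ι v x) : ℂ)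
            = (inner ℂ (((‖x‖ : ℝ) : ℂ) • ψ) (ι v (((‖x‖ : ℝ) : ℂ) • ψ)) : ℂ) := by rw [← hxψ]
          _ = (starRingEnd ℂ) ((‖x‖ : ℂ)) * ((‖x‖ : ℂ) * (inner ℂ ψ (ι v ψ) : ℂ)) := by
              rw [map_smul, inner_smul_left, inner_smul_right]
          _ = (c : ℂ) * ((‖x‖ : ℂ))^2 := by
              rw [Complex.conj_ofReal, hreal ψ hψ]; ring
    have hid : ι v = (c : ℂ) • (LinearMap.id : H →ₗ[ℂ] H) := by
      rw [← ext_inner_map]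
      intro x
      have hL : (inner ℂ ((ι v) x) x : ℂ) = (starRingEnd ℂ) (inner ℂ x ((ι v) x) : ℂ) := by
        rw [inner_conj_symm]
      rw [hL, h1 x]
      simp only [map_mul, ← Complex.ofReal_pow, Complex.conj_ofReal, LinearMap.smul_apply,
        LinearMap.id_apply, inner_smul_left, inner_self_eq_norm_sq_to_K]
      rw [Complex.ofReal_pow]
      exact rfl
    exact ⟨c, by rw [hid, ← Complex.coe_algebraMap, algebraMap_smul]⟩
  -- value of any density on scalarPart elements
  have hval : ∀ (Γ : H →ₗ[ℂ] H), IsEnsembleState Γ → ∀ v cv, ι v = cv • (LinearMap.id : H →ₗ[ℂ] H) →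
      traceDensity ι Γ v = cv := by
    intro Γ hΓ v cv hcv
    show (LinearMap.trace ℂ H (ι v ∘ₗ Γ)).re = cv
    have hcomp : ι v ∘ₗ Γ = ((cv : ℝ) : ℂ) • Γ := by
      rw [hcv]; ext x
      simp only [LinearMap.comp_apply, LinearMap.smul_apply, LinearMap.id_apply]
      rw [← Complex.coe_algebraMap, algebraMap_smul]
    rw [hcomp, map_smul, smul_eq_mul, hΓ.2.2, mul_one, Complex.ofReal_re]
  -- S equals the annihilator of scalarPart
  have hS : S = (scalarPart ι).dualAnnihilator := by
    apply le_antisymm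
    · rw [hSdir, vectorSpan_def]
      apply Submodule.span_le.2
      rintro _ ⟨σ1, hσ1, σ2, hσ2, rfl⟩
      obtain ⟨Γ1, hΓ1, rfl⟩ := hσ1
      obtain ⟨Γ2, hΓ2, rfl⟩ := hσ2
      rw [SetLike.mem_coe, Submodule.mem_dualAnnihilator]
      rintro v ⟨cv, hcv⟩
      show (traceDensity ι Γ1 -ᵥ traceDensity ι Γ2) v = 0
      rw [vsub_eq_sub, LinearMap.sub_apply, hval Γ1 hΓ1 v cv hcv, hval Γ2 hΓ2 v cv hcv,
        sub_self]
    · have h1 : S.dualCoannihilator.dualAnnihilator = S :=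
        Subspace.dualCoannihilator_dualAnnihilator_eq
      rw [← h1]
      intro α hα
      rw [Submodule.mem_dualAnnihilator] at hα ⊢
      exact fun v hv => hα v (hcoann hv)
  have hfr : Module.finrank ℝ S = Module.finrank ℝ V - Module.finrank ℝ (scalarPart ι) := by
    have hco : S.dualCoannihilator = scalarPart ι := by
      rw [hS, Subspace.dualAnnihilator_dualCoannihilator_eq]
    have h2 := Subspace.finrank_add_finrank_dualCoannihilator_eq S
    rw [hco] at h2
    have hle : Module.finrank ℝ (scalarPart ι) ≤ Module.finrank ℝ V := Submodule.finrank_le _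
    omega
  constructor
  · exact hfr
  · have hne : ((affineSpan ℝ D : AffineSubspace ℝ (Module.Dual ℝ V)) : Set (Module.Dual ℝ V)).Nonempty :=
      ⟨traceDensity ι (rankOneOp ψ0), subset_affineSpan ℝ D (key ψ0 hψ0)⟩
    rw [← AffineSubspace.direction_eq_top_iff_of_nonempty hne]
    have hbot : S = ⊤ ↔ scalarPart ι = ⊥ := by
      constructor
      · intro h
        have h3 := hfr
        rw [h, finrank_top, Subspace.dual_finrank_eq] at h3
        have hle : Module.finrank ℝ (scalarPart ι) ≤ Module.finrank ℝ V :=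
          Submodule.finrank_le _
        have h0 : Module.finrank ℝ (scalarPart ι) = 0 := by omega
        exact Submodule.finrank_eq_zero.1 h0
      · intro h
        rw [hS, h, Submodule.dualAnnihilator_bot]
    rw [show (affineSpan ℝ D).direction = S from rfl, hbot]
    constructor
    · intro h
      constructor
      · intro a b hab
        have hmem : a - b ∈ scalarPart ι := ⟨0, by rw [map_sub, hab, sub_self, zero_smul]⟩
        rw [h, Submodule.mem_bot] at hmem
        exact sub_eq_zero.1 hmem
      · rintro v hv ⟨cc, hcc⟩
        have hmem : v ∈ scalarPart ι := ⟨cc, hcc⟩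
        rw [h, Submodule.mem_bot] at hmem
        exact hv hmem
    · rintro ⟨-, h2⟩
      rw [eq_bot_iff]
      intro v hv
      rw [Submodule.mem_bot]
      by_contra hv0
      exact h2 v hv0 hv


end
end

section
/- (Density of a superposition of strongly orthogonal states.) In an abelian functional theory, let Φ and Φ' be unit vectors in H that are strongly orthogonal, i.e., for every weight ω ∈ Ω the orthogonal projections of Φ and Φ' onto the weight space H_ω are orthogonal. Let x, y ∈ ℂ with |x|² + |y|² = 1 and set Ψ = xΦ + yΦ'. Then Ψ is a unit vector and ι*(|Ψ⟩⟨Ψ|) = |x|² ι*(|Φ⟩⟨Φ|) + |y|² ι*(|Φ'⟩⟨Φ'|). -/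
open Filter Topology

noncomputable section

variable {V H : Type*}
  [AddCommGroup V] [Module ℝ V]
  [NormedAddCommGroup H] [InnerProductSpace ℂ H]

lemma mem_weightSpace' {ι : V →ₗ[ℝ] (H →ₗ[ℂ] H)} {α : Module.Dual ℝ V} {ψ : H} :
    ψ ∈ weightSpace ι α ↔ ∀ v, ι v ψ = (α v : ℂ) • ψ := Iff.rfl

lemma smul_cancel_of_ne_zero' {c d : ℂ} {ψ : H} (h0 : ψ ≠ 0) (h : c • ψ = d • ψ) : c = d := by
  by_contra hcd
  have h1 : (c - d) • ψ = 0 := by rw [sub_smul, h, sub_self]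
  rcases smul_eq_zero.mp h1 with h2 | h2
  · exact hcd (sub_eq_zero.mp h2)
  · exact h0 h2

lemma weightSpace_orthogonal' (ι : V →ₗ[ℝ] (H →ₗ[ℂ] H)) (hι : ∀ v : V, (ι v).IsSymmetric)
    {α β : Module.Dual ℝ V} (hab : α ≠ β) {ψ φ : H}
    (hψ : ψ ∈ weightSpace ι α) (hφ : φ ∈ weightSpace ι β) : (inner ℂ ψ φ : ℂ) = 0 := by
  obtain ⟨v, hv⟩ := DFunLike.ne_iff.mp hab
  have h1 : (inner ℂ (ι v ψ) φ : ℂ) = inner ℂ ψ (ι v φ) := hι v ψ φ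
  rw [hψ v, hφ v, inner_smul_left, inner_smul_right, Complex.conj_ofReal] at h1
  have h2 : ((α v : ℂ) - (β v : ℂ)) * inner ℂ ψ φ = 0 := by rw [sub_mul, h1, sub_self]
  rcases mul_eq_zero.mp h2 with h | h
  · exact absurd (by exact_mod_cast sub_eq_zero.mp h) hv
  · exact h

lemma weightSpace_iSup_eq_top' [FiniteDimensional ℂ H] (ι : V →ₗ[ℝ] (H →ₗ[ℂ] H))
    (hι : ∀ v : V, (ι v).IsSymmetric)
    (habel : ∀ v w : V, ι v ∘ₗ ι w = ι w ∘ₗ ι v) :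
    ⨆ α : Module.Dual ℝ V, weightSpace ι α = ⊤ := by
  have hcomm : Pairwise (Function.onFun Commute fun v : V => ι v) := fun v w _ => by
    simpa only [Commute, SemiconjBy, Module.End.mul_eq_comp] using habel v w
  have htop := LinearMap.IsSymmetric.iSup_iInf_eq_top_of_commute (T := fun v : V => ι v) hι hcomm
  rw [eq_top_iff, ← htop]
  refine iSup_le fun χ => ?_
  rcases eq_or_ne (⨅ v, Module.End.eigenspace (ι v) (χ v)) ⊥ with h | h
  · rw [h]; exact bot_le
  obtain ⟨ψ, hψmem, hψ0⟩ := Submodule.exists_mem_ne_zero_of_ne_bot h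
  have hψ : ∀ v, ι v ψ = χ v • ψ := fun v =>
    Module.End.mem_eigenspace_iff.mp ((Submodule.mem_iInf _).mp hψmem v)
  have hre : ∀ v, ((χ v).re : ℂ) = χ v := by
    intro v
    have h1 : (inner ℂ (ι v ψ) ψ : ℂ) = inner ℂ ψ (ι v ψ) := hι v ψ ψ
    rw [hψ v, inner_smul_left, inner_smul_right] at h1
    have hn : (inner ℂ ψ ψ : ℂ) ≠ 0 := inner_self_ne_zero.mpr hψ0
    exact Complex.conj_eq_iff_re.mp (mul_right_cancel₀ hn h1)
  have hmul : ∀ (c : ℝ) (v : V), χ (c • v) = (c : ℂ) * χ v := by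
    intro c v
    have h1 := hψ (c • v)
    rw [map_smul, LinearMap.smul_apply, hψ v, ← algebraMap_smul ℂ c (χ v • ψ),
      Complex.coe_algebraMap, smul_smul] at h1
    exact (smul_cancel_of_ne_zero' hψ0 h1).symm
  have hadd : ∀ v w : V, χ (v + w) = χ v + χ w := by
    intro v w
    have h1 := hψ (v + w)
    rw [map_add, LinearMap.add_apply, hψ v, hψ w, ← add_smul] at h1
    exact (smul_cancel_of_ne_zero' hψ0 h1).symm
  refine le_trans ?_ (le_iSup _
    ({ toFun := fun v => (χ v).re
       map_add' := fun v w => by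
         show (χ (v + w)).re = (χ v).re + (χ w).re
         rw [hadd v w, Complex.add_re]
       map_smul' := fun c v => by
         show (χ (c • v)).re = c * (χ v).re
         rw [hmul c v, Complex.re_ofReal_mul] } : Module.Dual ℝ V))
  intro φ hφ
  rw [mem_weightSpace']
  intro v
  have hφv : ι v φ = χ v • φ :=
    Module.End.mem_eigenspace_iff.mp ((Submodule.mem_iInf _).mp hφ v)
  rw [hφv]
  simp only [LinearMap.coe_mk, AddHom.coe_mk]
  rw [hre v]

lemma strongly_orthogonal_inner' [FiniteDimensional ℂ H] (ι : V →ₗ[ℝ] (H →ₗ[ℂ] H))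
    (hι : ∀ v : V, (ι v).IsSymmetric)
    (habel : ∀ v w : V, ι v ∘ₗ ι w = ι w ∘ₗ ι v)
    (Φ Φ' : H) (hSO : StronglyOrthogonal ι Φ Φ') :
    (inner ℂ Φ Φ' : ℂ) = 0 ∧ ∀ v : V, (inner ℂ Φ (ι v Φ') : ℂ) = 0 := by
  classical
  have htop := weightSpace_iSup_eq_top' ι hι habel
  have hmem : Φ' ∈ ⨆ α : Module.Dual ℝ V, weightSpace ι α := htop ▸ Submodule.mem_top
  obtain ⟨f, hf, hsum⟩ := (Submodule.mem_iSup_iff_exists_finsupp _ _).mp hmem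
  have key : ∀ α, (inner ℂ Φ (f α) : ℂ) = 0 := by
    intro α
    rcases eq_or_ne (f α) 0 with h0 | h0
    · rw [h0, inner_zero_right]
    have hWα : weightSpace ι α ≠ ⊥ := by
      intro hbot
      have h1 := hf α
      rw [hbot, Submodule.mem_bot] at h1
      exact h0 h1
    set P := Submodule.orthogonalProjectionOnto (weightSpace ι α) with hP
    have hfα : (P Φ' : H) = f α := by
      conv_lhs => rw [← hsum, Finsupp.sum]
      rw [map_sum, Submodule.coe_sum]
      have hz : ∀ b ∈ f.support, b ≠ α → ((P (f b) : H)) = 0 := by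
        intro b _ hb
        have hmem' : f b ∈ (weightSpace ι α)ᗮ := by
          rw [Submodule.mem_orthogonal]
          intro u hu
          exact weightSpace_orthogonal' ι hι (Ne.symm hb) hu (hf b)
        rw [Submodule.orthogonalProjectionOnto_apply_of_mem_orthogonal hmem',
          ZeroMemClass.coe_zero]
      rw [Finset.sum_eq_single_of_mem α (Finsupp.mem_support_iff.mpr h0) hz]
      exact Submodule.starProjection_eq_self_iff.mpr (hf α)
    have h2 : (inner ℂ ((P Φ : H)) ((P Φ' : H)) : ℂ) = inner ℂ Φ (f α) := by
      calc (inner ℂ ((P Φ : H)) ((P Φ' : H)) : ℂ)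
          = inner ℂ Φ ((P ((P Φ' : H)) : H)) := Submodule.inner_starProjection_left_eq_right _ _ _
        _ = inner ℂ Φ ((P Φ' : H)) := by rw [Submodule.orthogonalProjectionOnto_mem_subspace_eq_self]
        _ = inner ℂ Φ (f α) := by rw [hfα]
    rw [← h2, ← Submodule.coe_inner]
    exact hSO α hWα
  constructor
  · conv_lhs => rw [← hsum, Finsupp.sum]
    rw [inner_sum]
    exact Finset.sum_eq_zero fun β _ => key β
  · intro v
    conv_lhs => rw [← hsum, Finsupp.sum]
    rw [map_sum, inner_sum]
    refine Finset.sum_eq_zero fun β _ => ?_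
    rw [mem_weightSpace'.mp (hf β) v, inner_smul_right, key β, mul_zero]

/-- density of a superposition of strongly orthogonal states. -/
theorem strongly_orthogonal_superposition_density
    [FiniteDimensional ℝ V] [FiniteDimensional ℂ H] [Nontrivial H]
    (ι : V →ₗ[ℝ] (H →ₗ[ℂ] H)) (W : H →ₗ[ℂ] H)
    (hι : ∀ v : V, (ι v).IsSymmetric) (hW : W.IsSymmetric)
    (habel : ∀ v w : V, ι v ∘ₗ ι w = ι w ∘ₗ ι v)
    (Φ Φ' : H) (hΦ : ‖Φ‖ = 1) (hΦ' : ‖Φ'‖ = 1)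
    (hSO : StronglyOrthogonal ι Φ Φ')
    (x y : ℂ) (hxy : ‖x‖ ^ 2 + ‖y‖ ^ 2 = 1) :
    ‖x • Φ + y • Φ'‖ = 1 ∧
    pureDensity ι (x • Φ + y • Φ')
      = ‖x‖ ^ 2 • pureDensity ι Φ + ‖y‖ ^ 2 • pureDensity ι Φ' := by
  obtain ⟨h00, hker⟩ := strongly_orthogonal_inner' ι hι habel Φ Φ' hSO
  have hx2 : (starRingEnd ℂ) x * x = ((‖x‖ ^ 2 : ℝ) : ℂ) := by
    rw [RCLike.conj_mul]; norm_cast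
  have hy2 : (starRingEnd ℂ) y * y = ((‖y‖ ^ 2 : ℝ) : ℂ) := by
    rw [RCLike.conj_mul]; norm_cast
  have hnorm2 : ‖x • Φ + y • Φ'‖ ^ 2 = 1 := by
    rw [norm_add_sq (𝕜 := ℂ), inner_smul_left, inner_smul_right, h00, mul_zero, mul_zero]
    simp only [norm_smul, hΦ, hΦ', mul_one, map_zero, mul_zero, add_zero]
    simpa using hxy
  have hn : ‖x • Φ + y • Φ'‖ = 1 := by
    have h1 : (‖x • Φ + y • Φ'‖ - 1) * (‖x • Φ + y • Φ'‖ + 1) = 0 := by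
      linear_combination hnorm2
    rcases mul_eq_zero.mp h1 with h2 | h2
    · linarith
    · have := norm_nonneg (x • Φ + y • Φ'); linarith
  refine ⟨hn, ?_⟩
  ext v
  have hc1 : (inner ℂ Φ' (ι v Φ) : ℂ) = 0 := by
    rw [← hι v Φ' Φ, ← inner_conj_symm, hker v, map_zero]
  have hexp : (inner ℂ (x • Φ + y • Φ') (ι v (x • Φ + y • Φ')) : ℂ)
      = ((‖x‖ ^ 2 : ℝ) : ℂ) * inner ℂ Φ (ι v Φ) + ((‖y‖ ^ 2 : ℝ) : ℂ) * inner ℂ Φ' (ι v Φ') := by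
    simp only [map_add, map_smul, inner_add_left, inner_add_right, inner_smul_left,
      inner_smul_right, hker v, hc1, mul_zero, add_zero, zero_add]
    linear_combination (inner ℂ Φ ((ι v) Φ) : ℂ) * hx2 + (inner ℂ Φ' ((ι v) Φ') : ℂ) * hy2
  show expectation (ι v) (x • Φ + y • Φ')
      = (‖x‖ ^ 2 • pureDensity ι Φ + ‖y‖ ^ 2 • pureDensity ι Φ') v
  simp only [LinearMap.add_apply, LinearMap.smul_apply, smul_eq_mul]
  show (inner ℂ (x • Φ + y • Φ') (ι v (x • Φ + y • Φ')) : ℂ).re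
      = ‖x‖ ^ 2 * expectation (ι v) Φ + ‖y‖ ^ 2 * expectation (ι v) Φ'
  rw [hexp, Complex.add_re, Complex.re_ofReal_mul, Complex.re_ofReal_mul]
  rfl

end
end

section
/- (No-Mixing Lemma, strong form.) In an abelian functional theory, let ρ* lie in the relative interior of conv(Ω), and let Φ be a unit vector with ι*(|Φ⟩⟨Φ|) = ρ* that minimizes the constrained search at ρ*, i.e., ⟨Ψ, WΨ⟩ ≥ ⟨Φ, WΦ⟩ for every unit vector Ψ with ι*(|Ψ⟩⟨Ψ|) = ρ*. Then for every vector Γ ∈ H that is strongly orthogonal to Φ (meaning: for every weight ω ∈ Ω, the orthogonal projections of Γ and Φ onto H_ω are orthogonal), one has ⟨Γ, WΦ⟩ = 0. -/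
open Filter Topology

set_option maxHeartbeats 800000

noncomputable section

variable {V H : Type*}
  [AddCommGroup V] [Module ℝ V]
  [NormedAddCommGroup H] [InnerProductSpace ℂ H]

section Helpers
set_option linter.unusedSectionVars false

variable [FiniteDimensional ℂ H] {ι : V →ₗ[ℝ] (H →ₗ[ℂ] H)}

lemma mem_weightSpace_iff {α : Module.Dual ℝ V} {x : H} :
    x ∈ weightSpace ι α ↔ ∀ v : V, ι v x = (α v : ℂ) • x := Iff.rfl

lemma ws_orth (hι : ∀ v, (ι v).IsSymmetric) {α β : Module.Dual ℝ V} (hab : α ≠ β)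
    {x y : H} (hx : x ∈ weightSpace ι α) (hy : y ∈ weightSpace ι β) :
    (inner ℂ x y : ℂ) = 0 := by
  obtain ⟨v, hv⟩ : ∃ v, α v ≠ β v := by
    by_contra h; push_neg at h; exact hab (LinearMap.ext h)
  have h1 : (inner ℂ (ι v x) y : ℂ) = inner ℂ x (ι v y) := hι v x y
  rw [hx v, hy v, inner_smul_left, inner_smul_right, Complex.conj_ofReal] at h1
  have h2 : ((α v : ℂ) - (β v : ℂ)) * inner ℂ x y = 0 := by
    rw [sub_mul, h1]; ring
  rcases mul_eq_zero.mp h2 with h | h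
  · exact absurd (by exact_mod_cast sub_eq_zero.mp h) hv
  · exact h

lemma weights_finite (hι : ∀ v, (ι v).IsSymmetric) : (weights ι).Finite := by
  rw [← Set.finite_coe_iff]
  choose u hu hune using fun ω : weights ι => Submodule.exists_mem_ne_zero_of_ne_bot ω.2
  have horth : Orthonormal ℂ (fun ω : weights ι => (‖u ω‖ : ℂ)⁻¹ • u ω) := by
    constructor
    · intro i
      have : ‖u i‖ ≠ 0 := norm_ne_zero_iff.mpr (hune i)
      rw [norm_smul]
      simp [this]
    · intro i j hij
      rw [inner_smul_left, inner_smul_right,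
        ws_orth hι (fun h => hij (Subtype.ext h)) (hu i) (hu j)]
      simp
  exact horth.linearIndependent.finite

/-- The finite set of weights. -/
def Omega (hι : ∀ v, (ι v).IsSymmetric) : Finset (Module.Dual ℝ V) :=
  (weights_finite hι).toFinset

lemma mem_Omega {hι : ∀ v, (ι v).IsSymmetric} {ω : Module.Dual ℝ V} :
    ω ∈ Omega hι ↔ weightSpace ι ω ≠ ⊥ := by
  simp [Omega, Set.Finite.mem_toFinset, weights]

set_option linter.unusedSectionVars false

lemma mem_sup_ws (hι : ∀ v, (ι v).IsSymmetric)
    (habel : ∀ v w : V, ι v ∘ₗ ι w = ι w ∘ₗ ι v) (x : H) :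
    x ∈ ⨆ ω ∈ Omega hι, weightSpace ι ω := by
  have hOm : ∀ ω : Module.Dual ℝ V, ω ∈ Omega hι ↔ weightSpace ι ω ≠ ⊥ := fun _ => mem_Omega
  have hcomm : Pairwise (Function.onFun Commute fun v : V => ι v) := by
    intro v w _
    show ι v * ι w = ι w * ι v
    rw [Module.End.mul_eq_comp, Module.End.mul_eq_comp, habel]
  have htop := LinearMap.IsSymmetric.iSup_iInf_eq_top_of_commute hι hcomm
  have hle : (⨆ χ : V → ℂ, ⨅ v, Module.End.eigenspace (ι v) (χ v)) ≤
      ⨆ ω ∈ Omega hι, weightSpace ι ω := by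
    refine iSup_le fun χ => ?_
    by_cases hbot : (⨅ v, Module.End.eigenspace (ι v) (χ v)) = ⊥
    · rw [hbot]; exact bot_le
    obtain ⟨ψ, hψmem, hψ0⟩ := Submodule.exists_mem_ne_zero_of_ne_bot hbot
    have hkey : ∀ z : H, z ∈ (⨅ v, Module.End.eigenspace (ι v) (χ v)) →
        ∀ v, ι v z = χ v • z := fun z hz v =>
      Module.End.mem_eigenspace_iff.mp ((Submodule.mem_iInf _).mp hz v)
    have hψ : ∀ v, ι v ψ = χ v • ψ := hkey ψ hψmem
    have hre : ∀ v, ((χ v).re : ℂ) = χ v := by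
      intro v
      have h1 : (inner ℂ (ι v ψ) ψ : ℂ) = inner ℂ ψ (ι v ψ) := hι v ψ ψ
      rw [hψ v, inner_smul_left, inner_smul_right] at h1
      exact Complex.conj_eq_iff_re.mp (mul_right_cancel₀ (inner_self_ne_zero.mpr hψ0) h1)
    have hadd : ∀ v w, χ (v + w) = χ v + χ w := by
      intro v w
      have h3 : χ (v + w) • ψ = (χ v + χ w) • ψ := by
        rw [← hψ (v + w), map_add, LinearMap.add_apply, hψ v, hψ w, add_smul]
      exact smul_left_injective ℂ hψ0 h3
    have hsmul : ∀ (c : ℝ) v, χ (c • v) = (c : ℂ) * χ v := by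
      intro c v
      have h3 : χ (c • v) • ψ = ((c : ℂ) * χ v) • ψ := by
        rw [← hψ (c • v), map_smul, LinearMap.smul_apply, hψ v,
          ← algebraMap_smul ℂ c ((χ v) • ψ), Complex.coe_algebraMap, smul_smul]
      exact smul_left_injective ℂ hψ0 h3
    set α : Module.Dual ℝ V :=
      { toFun := fun v => (χ v).re
        map_add' := fun v w => by show (χ (v + w)).re = (χ v).re + (χ w).re; rw [hadd]; simp
        map_smul' := fun c v => by
          show (χ (c • v)).re = c • (χ v).re; rw [hsmul]; simp } with hα
    have hws : (⨅ v, Module.End.eigenspace (ι v) (χ v)) ≤ weightSpace ι α := by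
      intro z hz
      rw [mem_weightSpace_iff]
      intro v
      rw [hkey z hz v, show ((α v : ℝ) : ℂ) = χ v from hre v]
    have hαΩ : α ∈ Omega hι := (hOm α).mpr
      (Submodule.ne_bot_iff _ |>.mpr ⟨ψ, hws hψmem, hψ0⟩)
    exact le_trans hws (le_iSup₂ (f := fun ω _ => weightSpace ι ω) α hαΩ)
  exact hle (htop ▸ Submodule.mem_top)


lemma mem_ws_orthogonal (hι : ∀ v, (ι v).IsSymmetric) {α β : Module.Dual ℝ V} (hab : α ≠ β)
    {x : H} (hx : x ∈ weightSpace ι β) : x ∈ (weightSpace ι α)ᗮ :=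
  (Submodule.mem_orthogonal _ _).mpr fun _ hu => ws_orth hι hab hu hx

lemma proj_sum (hι : ∀ v, (ι v).IsSymmetric) {f : Module.Dual ℝ V → H}
    (hf : ∀ ω ∈ Omega hι, f ω ∈ weightSpace ι ω) {α : Module.Dual ℝ V} (hα : α ∈ Omega hι) :
    (Submodule.orthogonalProjectionOnto (weightSpace ι α) (∑ ω ∈ Omega hι, f ω) : H) = f α := by
  have h1 : Submodule.orthogonalProjectionOnto (weightSpace ι α) (∑ ω ∈ Omega hι, f ω)
      = ∑ ω ∈ Omega hι, Submodule.orthogonalProjectionOnto (weightSpace ι α) (f ω) := map_sum _ _ _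
  rw [h1, Submodule.coe_sum, Finset.sum_eq_single_of_mem α hα]
  · exact Submodule.starProjection_eq_self_iff.mpr (hf α hα)
  · intro β hβ hne
    rw [Submodule.orthogonalProjectionOnto_apply_of_mem_orthogonal
      (mem_ws_orthogonal hι (Ne.symm hne) (hf β hβ))]
    rfl

lemma sum_proj (hι : ∀ v, (ι v).IsSymmetric)
    (habel : ∀ v w : V, ι v ∘ₗ ι w = ι w ∘ₗ ι v) (x : H) :
    ∑ ω ∈ Omega hι, (Submodule.orthogonalProjectionOnto (weightSpace ι ω) x : H) = x := by
  obtain ⟨μ, hμ⟩ := (Submodule.mem_iSup_finset_iff_exists_sum _ x).mp (mem_sup_ws hι habel x)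
  conv_lhs => rw [← hμ]
  conv_rhs => rw [← hμ]
  exact Finset.sum_congr rfl fun ω hω => proj_sum hι (fun β _ => (μ β).2) hω

lemma inner_sum_comp (hι : ∀ v, (ι v).IsSymmetric) {f g : Module.Dual ℝ V → H}
    (hf : ∀ ω ∈ Omega hι, f ω ∈ weightSpace ι ω)
    (hg : ∀ ω ∈ Omega hι, g ω ∈ weightSpace ι ω) :
    (inner ℂ (∑ ω ∈ Omega hι, f ω) (∑ ω ∈ Omega hι, g ω) : ℂ)
      = ∑ ω ∈ Omega hι, (inner ℂ (f ω) (g ω) : ℂ) := by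
  rw [sum_inner]
  refine Finset.sum_congr rfl fun ω hω => ?_
  rw [inner_sum, Finset.sum_eq_single_of_mem ω hω]
  intro β hβ hne
  exact ws_orth hι (Ne.symm hne) (hf ω hω) (hg β hβ)

lemma inner_map_sum_comp (hι : ∀ v, (ι v).IsSymmetric) (v : V) {f g : Module.Dual ℝ V → H}
    (hf : ∀ ω ∈ Omega hι, f ω ∈ weightSpace ι ω)
    (hg : ∀ ω ∈ Omega hι, g ω ∈ weightSpace ι ω) :
    (inner ℂ (∑ ω ∈ Omega hι, f ω) (ι v (∑ ω ∈ Omega hι, g ω)) : ℂ)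
      = ∑ ω ∈ Omega hι, ((ω v : ℝ) : ℂ) * (inner ℂ (f ω) (g ω) : ℂ) := by
  have hg' : ι v (∑ ω ∈ Omega hι, g ω) = ∑ ω ∈ Omega hι, ((ω v : ℝ) : ℂ) • g ω := by
    rw [map_sum]; exact Finset.sum_congr rfl fun ω hω => hg ω hω v
  rw [hg', inner_sum_comp hι hf (fun ω hω => Submodule.smul_mem _ _ (hg ω hω))]
  exact Finset.sum_congr rfl fun ω hω => inner_smul_right _ _ _

lemma re_inner_self (x : H) : (inner ℂ x x : ℂ).re = ‖x‖ ^ 2 := by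
  rw [show (inner ℂ x x : ℂ).re = RCLike.re (inner ℂ x x : ℂ) from rfl, inner_self_eq_norm_sq]

lemma norm_sq_sum_comp (hι : ∀ v, (ι v).IsSymmetric) {f : Module.Dual ℝ V → H}
    (hf : ∀ ω ∈ Omega hι, f ω ∈ weightSpace ι ω) :
    ‖∑ ω ∈ Omega hι, f ω‖ ^ 2 = ∑ ω ∈ Omega hι, ‖f ω‖ ^ 2 := by
  have h := congrArg Complex.re (inner_sum_comp hι hf hf)
  rwa [re_inner_self, Complex.re_sum,
    Finset.sum_congr rfl (fun ω _ => re_inner_self (f ω))] at h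

lemma expectation_sum_comp (hι : ∀ v, (ι v).IsSymmetric) (v : V) {f : Module.Dual ℝ V → H}
    (hf : ∀ ω ∈ Omega hι, f ω ∈ weightSpace ι ω) :
    expectation (ι v) (∑ ω ∈ Omega hι, f ω) = ∑ ω ∈ Omega hι, ω v * ‖f ω‖ ^ 2 := by
  rw [show expectation (ι v) (∑ ω ∈ Omega hι, f ω)
      = (inner ℂ (∑ ω ∈ Omega hι, f ω) (ι v (∑ ω ∈ Omega hι, f ω)) : ℂ).re from rfl,
    inner_map_sum_comp hι v hf hf, Complex.re_sum]
  refine Finset.sum_congr rfl fun ω hω => ?_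
  rw [Complex.mul_re,
    show (inner ℂ (f ω) (f ω) : ℂ).im = RCLike.im (inner ℂ (f ω) (f ω) : ℂ) from rfl,
    inner_self_im, re_inner_self]
  simp


lemma inner_real_smul_left (s : ℝ) (x y : H) :
    (inner ℂ (s • x) y : ℂ) = (s : ℂ) * inner ℂ x y := by
  rw [← algebraMap_smul ℂ s x, Complex.coe_algebraMap, inner_smul_left, Complex.conj_ofReal]

lemma inner_real_smul_right (s : ℝ) (x y : H) :
    (inner ℂ x (s • y) : ℂ) = (s : ℂ) * inner ℂ x y := by
  rw [← algebraMap_smul ℂ s y, Complex.coe_algebraMap, inner_smul_right]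

lemma re_inner_le (x y : H) : |(inner ℂ x y : ℂ).re| ≤ ‖x‖ * ‖y‖ :=
  le_trans (Complex.abs_re_le_norm _) (by exact norm_inner_le_norm x y)

lemma expectation_add_s14 {W : H →ₗ[ℂ] H} (hW : W.IsSymmetric) (u w : H) :
    expectation W (u + w)
      = expectation W u + 2 * (inner ℂ w (W u) : ℂ).re + expectation W w := by
  have hsym : (inner ℂ u (W w) : ℂ) = starRingEnd ℂ (inner ℂ w (W u)) := by
    rw [← inner_conj_symm u (W w)]
    exact congrArg (starRingEnd ℂ) (hW w u)
  show (inner ℂ (u + w) (W (u + w)) : ℂ).re = _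
  rw [map_add, inner_add_left, inner_add_right, inner_add_right]
  unfold expectation
  simp only [Complex.add_re]
  rw [show (inner ℂ u (W w) : ℂ).re = (inner ℂ w (W u) : ℂ).re from by rw [hsym, Complex.conj_re]]
  ring

lemma variational {W : H →ₗ[ℂ] H} (hW : W.IsSymmetric)
    {ρ₀ : Module.Dual ℝ V} {Φ : H} (hΦ1 : ‖Φ‖ = 1)
    (hmin : ∀ Ψ : H, ‖Ψ‖ = 1 → pureDensity ι Ψ = ρ₀ → expectation W Φ ≤ expectation W Ψ)
    (X : H) (C : ℝ) (Ψ : ℝ → H)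
    (h1 : ∀ s : ℝ, |s| ≤ 1 → ‖Ψ s‖ = 1)
    (h2 : ∀ s : ℝ, |s| ≤ 1 → pureDensity ι (Ψ s) = ρ₀)
    (h3 : ∀ s : ℝ, |s| ≤ 1 → ‖Ψ s - (Φ + s • X)‖ ≤ C * s ^ 2) :
    (inner ℂ X (W Φ) : ℂ).re = 0 := by
  set κ := ‖LinearMap.toContinuousLinearMap W‖ with hκdef
  have hκ0 : (0:ℝ) ≤ κ := norm_nonneg _
  have hWle : ∀ y : H, ‖W y‖ ≤ κ * ‖y‖ := fun y =>
    ContinuousLinearMap.le_opNorm (LinearMap.toContinuousLinearMap W) y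
  have hC0 : 0 ≤ C := by
    have h := h3 1 (by norm_num)
    have h0 := norm_nonneg (Ψ 1 - (Φ + (1:ℝ) • X))
    nlinarith
  set a := (inner ℂ X (W Φ) : ℂ).re with hadef
  set K := 2*C*κ + κ*(‖X‖+C)^2 with hKdef
  have hK0 : 0 ≤ K := by positivity
  have key : ∀ s : ℝ, |s| ≤ 1 → -(2*s*a) ≤ K * s^2 := by
    intro s hs
    have hd3 := h3 s hs
    set e := Ψ s - (Φ + s • X) with hedef
    set d := Ψ s - Φ with hddef
    have hde : d = s • X + e := by rw [hedef, hddef]; abel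
    have hs2 : s^2 ≤ |s| := by
      rw [← sq_abs]
      nlinarith [abs_nonneg s]
    have hdn : ‖d‖ ≤ (‖X‖ + C) * |s| := by
      rw [hde]
      calc ‖s • X + e‖ ≤ ‖s • X‖ + ‖e‖ := norm_add_le _ _
        _ ≤ |s| * ‖X‖ + C * s^2 := by
            rw [norm_smul, Real.norm_eq_abs]
            exact add_le_add le_rfl hd3
        _ ≤ |s| * ‖X‖ + C * |s| := by nlinarith
        _ = (‖X‖ + C) * |s| := by ring
    have hΨd : Ψ s = Φ + d := by rw [hddef]; abel
    have hexp : expectation W (Ψ s)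
        = expectation W Φ + 2 * (inner ℂ d (W Φ) : ℂ).re + expectation W d := by
      rw [hΨd, expectation_add_s14 hW]
    have hmin' : expectation W Φ ≤ expectation W (Ψ s) := hmin _ (h1 s hs) (h2 s hs)
    have hsplit : (inner ℂ d (W Φ) : ℂ).re = s * a + (inner ℂ e (W Φ) : ℂ).re := by
      rw [hde, inner_add_left, Complex.add_re, inner_real_smul_left, hadef]
      simp [Complex.mul_re]
    have hb1 : |(inner ℂ e (W Φ) : ℂ).re| ≤ C * κ * s^2 := by
      calc |(inner ℂ e (W Φ) : ℂ).re| ≤ ‖e‖ * ‖W Φ‖ := re_inner_le _ _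
        _ ≤ (C * s^2) * (κ * 1) := by
            apply mul_le_mul hd3 (by rw [← hΦ1] at *; exact hWle Φ) (norm_nonneg _)
            positivity
        _ = C * κ * s^2 := by ring
    have hb2 : |expectation W d| ≤ κ * (‖X‖ + C)^2 * s^2 := by
      have : |expectation W d| ≤ ‖d‖ * ‖W d‖ := re_inner_le _ _
      have h4 : ‖d‖ * ‖W d‖ ≤ ‖d‖ * (κ * ‖d‖) :=
        mul_le_mul_of_nonneg_left (hWle d) (norm_nonneg _)
      have h5 : ‖d‖ * (κ * ‖d‖) ≤ ((‖X‖+C)*|s|) * (κ * ((‖X‖+C)*|s|)) := by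
        apply mul_le_mul hdn _ (by positivity) (by positivity)
        exact mul_le_mul_of_nonneg_left hdn hκ0
      have h6 : ((‖X‖+C)*|s|) * (κ * ((‖X‖+C)*|s|)) = κ * (‖X‖ + C)^2 * s^2 := by
        rw [← sq_abs s]; ring
      linarith
    rw [hexp, hsplit] at hmin'
    have hre1 := abs_le.mp hb1
    have hre2 := abs_le.mp hb2
    rw [hKdef]
    nlinarith [hre1.1, hre2.1, hmin']
  by_contra ha
  have hapos : 0 < |a| := abs_pos.mpr ha
  set s := min 1 (|a| / (K + 1)) with hsdef
  have hs0 : 0 < s := lt_min one_pos (by positivity)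
  have hs1 : |s| ≤ 1 := by rw [abs_of_pos hs0]; exact min_le_left _ _
  have k1 := key s hs1
  have k2 := key (-s) (by rwa [abs_neg])
  have habs : 2 * s * |a| ≤ K * s^2 := by
    rcases abs_cases a with ⟨h,_⟩ | ⟨h,_⟩ <;> nlinarith
  have hsle : s ≤ |a| / (K+1) := min_le_right _ _
  have hKp : (0:ℝ) < K + 1 := by linarith
  have hsle' : s * (K+1) ≤ |a| := by
    rw [← le_div_iff₀ hKp] at *
    exact hsle
  nlinarith [mul_pos hs0 hapos, habs, hsle', hs0, hapos, hK0, sq_nonneg s]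


lemma inner_orthogonal_right {K : Submodule ℂ H} {y w : H} (hy : y ∈ Kᗮ) (hw : w ∈ K) :
    (inner ℂ y w : ℂ) = 0 := (Submodule.mem_orthogonal' K y).mp hy w hw

lemma exp_split (hι : ∀ v, (ι v).IsSymmetric) {α : Module.Dual ℝ V} {y w : H}
    (hy : y ∈ (weightSpace ι α)ᗮ) (hw : w ∈ weightSpace ι α) (v : V) :
    expectation (ι v) (y + w) = (inner ℂ y (ι v y) : ℂ).re + α v * ‖w‖ ^ 2 := by
  have h1 : (inner ℂ y (ι v w) : ℂ) = 0 := by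
    rw [hw v, inner_smul_right, inner_orthogonal_right hy hw, mul_zero]
  have h2 : (inner ℂ w (ι v y) : ℂ) = 0 := by
    rw [← hι v w y, hw v, inner_smul_left,
      Submodule.inner_right_of_mem_orthogonal hw hy, mul_zero]
  show (inner ℂ (y + w) (ι v (y + w)) : ℂ).re = _
  rw [map_add, inner_add_left, inner_add_right, inner_add_right, h1, h2, add_zero, zero_add,
    hw v, inner_smul_right]
  simp only [Complex.add_re, Complex.mul_re, Complex.ofReal_re, Complex.ofReal_im]
  rw [re_inner_self, show (inner ℂ w w : ℂ).im = RCLike.im (inner ℂ w w : ℂ) from rfl, inner_self_im]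
  ring

lemma case1 (hι : ∀ v, (ι v).IsSymmetric) {W : H →ₗ[ℂ] H} (hW : W.IsSymmetric)
    {ρ₀ : Module.Dual ℝ V} {Φ : H} (hΦ1 : ‖Φ‖ = 1) (hΦρ : pureDensity ι Φ = ρ₀)
    (hmin : ∀ Ψ : H, ‖Ψ‖ = 1 → pureDensity ι Ψ = ρ₀ → expectation W Φ ≤ expectation W Ψ)
    {α : Module.Dual ℝ V} {γ : H} (hγmem : γ ∈ weightSpace ι α) (hγ1 : ‖γ‖ = 1)
    (hγΦ : (inner ℂ γ ((Submodule.orthogonalProjectionOnto (weightSpace ι α) Φ : H)) : ℂ) = 0)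
    (hΦα : ((Submodule.orthogonalProjectionOnto (weightSpace ι α) Φ : H)) ≠ 0) :
    (inner ℂ γ (W Φ) : ℂ).re = 0 := by
  set K := weightSpace ι α with hK
  set Φα : H := (Submodule.orthogonalProjectionOnto K Φ : H) with hΦα'
  set p : ℝ := ‖Φα‖ ^ 2 with hp'
  have hp : 0 < p := by rw [hp']; exact pow_pos (norm_pos_iff.mpr hΦα) 2
  have hmemα : Φα ∈ K := (Submodule.orthogonalProjectionOnto K Φ).2
  have hyortho : Φ - Φα ∈ Kᗮ := Submodule.sub_starProjection_mem_orthogonal (K := K) Φ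
  have hΦαγ : (inner ℂ Φα γ : ℂ) = 0 := by
    rw [← inner_conj_symm, hγΦ, map_zero]
  set z : ℝ → H := fun s => Φα + (s : ℂ) • γ with hz
  have hzmem : ∀ s, z s ∈ K := fun s => K.add_mem hmemα (K.smul_mem _ hγmem)
  have hznorm : ∀ s : ℝ, ‖z s‖ ^ 2 = p + s ^ 2 := by
    intro s
    have e1 : (inner ℂ Φα ((s:ℂ) • γ) : ℂ) = 0 := by rw [inner_smul_right, hΦαγ, mul_zero]
    have e2 : (inner ℂ ((s:ℂ) • γ) Φα : ℂ) = 0 := by rw [inner_smul_left, hγΦ, mul_zero]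
    have e3 : RCLike.re (inner ℂ (z s) (z s) : ℂ)
        = RCLike.re (inner ℂ Φα Φα : ℂ) + RCLike.re (inner ℂ ((s:ℂ)•γ) ((s:ℂ)•γ) : ℂ) := by
      rw [show z s = Φα + (s:ℂ) • γ from rfl,
        inner_add_left, inner_add_right, inner_add_right, e1, e2]
      simp
    have e4 : ‖z s‖^2 = RCLike.re (inner ℂ (z s) (z s) : ℂ) := (inner_self_eq_norm_sq _).symm
    rw [e4, e3, show RCLike.re (inner ℂ ((s:ℂ)•γ) ((s:ℂ)•γ) : ℂ) = ‖(s:ℂ)•γ‖^2 from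
      inner_self_eq_norm_sq _,
      show RCLike.re (inner ℂ Φα Φα : ℂ) = ‖Φα‖^2 from inner_self_eq_norm_sq _]
    rw [norm_smul, Complex.norm_real, Real.norm_eq_abs, mul_pow, sq_abs, hγ1, ← hp']
    ring
  set c : ℝ → ℝ := fun s => Real.sqrt (p / (p + s ^ 2)) with hc
  have hpds : ∀ s : ℝ, 0 < p + s ^ 2 := fun s => by positivity
  have hc0 : ∀ s, 0 ≤ c s := fun s => Real.sqrt_nonneg _
  have hcsq : ∀ s : ℝ, (c s) ^ 2 = p / (p + s ^ 2) := fun s =>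
    Real.sq_sqrt (by positivity)
  have hcnorm : ∀ s : ℝ, (c s) ^ 2 * ‖z s‖ ^ 2 = p := by
    intro s
    rw [hcsq, hznorm]
    field_simp
  set Ψ : ℝ → H := fun s => (Φ - Φα) + c s • z s with hΨ
  have hwmem : ∀ s, c s • z s ∈ K := fun s => K.smul_of_tower_mem _ (hzmem s)
  have hwnorm : ∀ s : ℝ, ‖c s • z s‖ ^ 2 = p := by
    intro s
    rw [norm_smul, Real.norm_eq_abs, abs_of_nonneg (hc0 s), mul_pow, hcnorm]
  have hΦsplit : Φ = (Φ - Φα) + Φα := by abel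
  have hnormsplit : ∀ w : H, w ∈ K → ‖(Φ - Φα) + w‖ ^ 2 = ‖Φ - Φα‖ ^ 2 + ‖w‖ ^ 2 := by
    intro w hwK
    rw [show ‖(Φ - Φα) + w‖ ^ 2 = RCLike.re (inner ℂ ((Φ - Φα) + w) ((Φ - Φα) + w) : ℂ) from
      (inner_self_eq_norm_sq _).symm]
    rw [inner_add_left, inner_add_right, inner_add_right,
      inner_orthogonal_right hyortho hwK,
      Submodule.inner_right_of_mem_orthogonal hwK hyortho]
    simp only [add_zero, zero_add, map_add]
    rw [show RCLike.re (inner ℂ (Φ - Φα) (Φ - Φα) : ℂ) = ‖Φ - Φα‖^2 from inner_self_eq_norm_sq _,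
      show RCLike.re (inner ℂ w w : ℂ) = ‖w‖^2 from inner_self_eq_norm_sq _]
  have h1 : ∀ s : ℝ, |s| ≤ 1 → ‖Ψ s‖ = 1 := by
    intro s _
    have hsq : ‖Ψ s‖ ^ 2 = 1 := by
      rw [hΨ]
      show ‖(Φ - Φα) + c s • z s‖ ^ 2 = 1
      rw [hnormsplit _ (hwmem s), hwnorm s]
      have h0 : ‖Φ - Φα‖ ^ 2 + ‖Φα‖ ^ 2 = 1 := by
        rw [← hnormsplit Φα hmemα, ← hΦsplit, hΦ1]; norm_num
      rw [← hp'] at h0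
      linarith
    have := congrArg Real.sqrt hsq
    rwa [Real.sqrt_sq (norm_nonneg _), Real.sqrt_one] at this
  have h2 : ∀ s : ℝ, |s| ≤ 1 → pureDensity ι (Ψ s) = ρ₀ := by
    intro s _
    rw [← hΦρ]
    apply LinearMap.ext
    intro v
    show expectation (ι v) (Ψ s) = expectation (ι v) Φ
    rw [hΨ]
    show expectation (ι v) ((Φ - Φα) + c s • z s) = expectation (ι v) Φ
    conv_rhs => rw [hΦsplit]
    rw [exp_split hι hyortho (hwmem s) v, exp_split hι hyortho hmemα v, hwnorm s, hp']
  have h3 : ∀ s : ℝ, |s| ≤ 1 → ‖Ψ s - (Φ + s • γ)‖ ≤ (Real.sqrt p)⁻¹ * s ^ 2 := by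
    intro s _
    have hsmul : s • γ = (s : ℂ) • γ := by
      rw [← algebraMap_smul ℂ s γ, Complex.coe_algebraMap]
    have hdiff : Ψ s - (Φ + s • γ) = (c s - 1) • z s := by
      rw [hΨ, hsmul]
      show (Φ - Φα) + c s • z s - (Φ + (s:ℂ) • γ) = (c s - 1) • z s
      rw [sub_smul, one_smul]
      show _ = c s • z s - (Φα + (s:ℂ) • γ)
      abel
    rw [hdiff, norm_smul, Real.norm_eq_abs]
    set A := Real.sqrt (p + s ^ 2) with hA
    set B := Real.sqrt p with hB
    have hA0 : 0 < A := Real.sqrt_pos.mpr (hpds s)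
    have hB0 : 0 < B := Real.sqrt_pos.mpr hp
    have hA2 : A ^ 2 = p + s ^ 2 := Real.sq_sqrt (le_of_lt (hpds s))
    have hB2 : B ^ 2 = p := Real.sq_sqrt (le_of_lt hp)
    have hzA : ‖z s‖ = A := by
      have h4 := congrArg Real.sqrt (hznorm s)
      rwa [Real.sqrt_sq (norm_nonneg _), ← hA] at h4
    have hcA : c s * A = B := by
      have h4 : (c s * A) ^ 2 = B ^ 2 := by rw [mul_pow, hcsq, hA2, hB2]; field_simp
      have h5 := congrArg Real.sqrt h4
      rwa [Real.sqrt_sq (mul_nonneg (hc0 s) hA0.le), Real.sqrt_sq hB0.le] at h5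
    have hAB : B ≤ A := by nlinarith [hA2, hB2, sq_nonneg s]
    have hc1 : c s ≤ 1 :=
      le_of_mul_le_mul_right (by rw [hcA, one_mul]; exact hAB) hA0
    rw [hzA, abs_of_nonpos (by linarith : c s - 1 ≤ 0)]
    have hkey : (1 - c s) * A = A - B := by rw [sub_mul, hcA, one_mul]
    rw [show -(c s - 1) = 1 - c s from by ring, hkey]
    have hsq2 : A ^ 2 - B ^ 2 = s ^ 2 := by rw [hA2, hB2]; ring
    have hid : (A - B) * (A + B) = s ^ 2 := by linear_combination hsq2
    have h5 : (A - B) * B ≤ s ^ 2 := by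
      nlinarith [mul_nonneg (sub_nonneg.mpr hAB) hA0.le]
    calc A - B ≤ s ^ 2 / B := (le_div_iff₀ hB0).mpr h5
      _ = B⁻¹ * s ^ 2 := by rw [div_eq_inv_mul]
  exact variational hW hΦ1 hmin γ ((Real.sqrt p)⁻¹) Ψ h1 h2 h3


lemma sqrt_sub_sqrt_le {a b : ℝ} (ha : 0 ≤ a) (hb : 0 < b) :
    |Real.sqrt a - Real.sqrt b| ≤ |a - b| / Real.sqrt b := by
  set A := Real.sqrt a with hA
  set B := Real.sqrt b with hB
  have hA0 : 0 ≤ A := Real.sqrt_nonneg _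
  have hB0 : 0 < B := Real.sqrt_pos.mpr hb
  have hA2 : A^2 = a := Real.sq_sqrt ha
  have hB2 : B^2 = b := Real.sq_sqrt hb.le
  rw [le_div_iff₀ hB0]
  have hid : (A - B) * (A + B) = a - b := by linear_combination hA2 - hB2
  calc |A - B| * B ≤ |A - B| * (A + B) := by
        apply mul_le_mul_of_nonneg_left _ (abs_nonneg _)
        linarith
    _ = |(A - B) * (A + B)| := by
        rw [abs_mul, abs_of_nonneg (by linarith : (0:ℝ) ≤ A + B)]
    _ = |a - b| := by rw [hid]

lemma case2 (hι : ∀ v, (ι v).IsSymmetric)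
    (habel : ∀ v w : V, ι v ∘ₗ ι w = ι w ∘ₗ ι v)
    {W : H →ₗ[ℂ] H} (hW : W.IsSymmetric)
    {ρ₀ : Module.Dual ℝ V} (hρ₀ : IsRelInterior (convexHull ℝ (weights ι)) ρ₀)
    {Φ : H} (hΦ1 : ‖Φ‖ = 1) (hΦρ : pureDensity ι Φ = ρ₀)
    (hmin : ∀ Ψ : H, ‖Ψ‖ = 1 → pureDensity ι Ψ = ρ₀ → expectation W Φ ≤ expectation W Ψ)
    {α : Module.Dual ℝ V} (hα : α ∈ Omega hι) {γ : H}
    (hγmem : γ ∈ weightSpace ι α) (hγ1 : ‖γ‖ = 1)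
    (hΦα : ((Submodule.orthogonalProjectionOnto (weightSpace ι α) Φ : H)) = 0) :
    (inner ℂ γ (W Φ) : ℂ) = 0 := by
  classical
  set f : Module.Dual ℝ V → H := fun ω => (Submodule.orthogonalProjectionOnto (weightSpace ι ω) Φ : H) with hf
  have hfmem : ∀ ω ∈ Omega hι, f ω ∈ weightSpace ι ω := fun ω _ =>
    (Submodule.orthogonalProjectionOnto (weightSpace ι ω) Φ).2
  have hfsum : ∑ ω ∈ Omega hι, f ω = Φ := sum_proj hι habel Φ
  set p : Module.Dual ℝ V → ℝ := fun ω => ‖f ω‖^2 with hp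
  have hp0 : ∀ ω, 0 ≤ p ω := fun ω => sq_nonneg _
  have hpsum : ∑ ω ∈ Omega hι, p ω = 1 := by
    have h := norm_sq_sum_comp hι hfmem
    rw [hfsum, hΦ1] at h
    simpa using h.symm
  have hpρ : ∀ v, ∑ ω ∈ Omega hι, ω v * p ω = ρ₀ v := by
    intro v
    have h := expectation_sum_comp hι v hfmem
    rw [hfsum] at h
    rw [← h]
    exact LinearMap.congr_fun hΦρ v
  have hαw : α ∈ convexHull ℝ (weights ι) :=
    subset_convexHull ℝ _ (show α ∈ weights ι from mem_Omega.mp hα)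
  obtain ⟨τ, hτ, t, ht0, ht1, hρt⟩ := hρ₀.2 α hαw
  rw [Set.Finite.convexHull_eq (weights_finite hι)] at hτ
  obtain ⟨q, hq0, hqsum, hqcm⟩ := hτ
  have hqsum' : ∑ ω ∈ Omega hι, q ω = 1 := hqsum
  have hqcm' : ∑ ω ∈ Omega hι, q ω • ω = τ := by
    rw [show (∑ ω ∈ Omega hι, q ω • ω) = (Omega hι).centerMass q id from
      (Finset.centerMass_eq_of_sum_1 _ id hqsum').symm]
    exact hqcm
  have hq0' : ∀ ω ∈ Omega hι, 0 ≤ q ω := fun ω hω =>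
    hq0 ω (show ω ∈ weights ι from mem_Omega.mp hω)
  set r : Module.Dual ℝ V → ℝ := fun ω => t * (if ω = α then 1 else 0) + (1-t) * q ω with hr
  have hr0 : ∀ ω ∈ Omega hι, 0 ≤ r ω := by
    intro ω hω
    apply add_nonneg (mul_nonneg ht0.le (by split <;> norm_num))
    exact mul_nonneg (by linarith) (hq0' ω hω)
  have hrα : t ≤ r α := by
    have h6 := hq0' α hα
    have h7 : r α = t + (1 - t) * q α := by simp [hr]
    nlinarith
  have hrsum : ∑ ω ∈ Omega hι, r ω = 1 := by
    simp only [hr]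
    rw [Finset.sum_add_distrib, ← Finset.mul_sum, ← Finset.mul_sum,
      Finset.sum_ite_eq' (Omega hι) α (fun _ => (1:ℝ)), if_pos hα, hqsum']
    ring
  have hrρ : ∀ v, ∑ ω ∈ Omega hι, ω v * r ω = ρ₀ v := by
    intro v
    have hτv : ∑ ω ∈ Omega hι, q ω * ω v = τ v := by
      have h := LinearMap.congr_fun hqcm' v
      simpa [LinearMap.sum_apply, LinearMap.smul_apply, smul_eq_mul] using h
    have hρv : ρ₀ v = t * α v + (1-t) * τ v := by
      have h := LinearMap.congr_fun hρt v
      simpa [LinearMap.add_apply, LinearMap.smul_apply, smul_eq_mul] using h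
    have hexp : ∀ ω ∈ Omega hι,
        ω v * r ω = t * (if ω = α then α v else 0) + (1-t) * (q ω * ω v) := by
      intro ω hω
      simp only [hr]
      split_ifs with hcase
      · subst hcase; ring
      · ring
    rw [Finset.sum_congr rfl hexp, Finset.sum_add_distrib, ← Finset.mul_sum, ← Finset.mul_sum,
      Finset.sum_ite_eq' (Omega hι) α (fun _ => α v), if_pos hα, hτv, hρv]
  have hfil : ∀ ω, ω ∈ Omega hι → ∃ x : H, x ∈ weightSpace ι ω ∧ ‖x‖ = 1 := by
    intro ω hω
    obtain ⟨x, hx, hx0⟩ := Submodule.exists_mem_ne_zero_of_ne_bot (mem_Omega.mp hω)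
    refine ⟨‖x‖⁻¹ • x, Submodule.smul_of_tower_mem _ _ hx, ?_⟩
    rw [norm_smul, Real.norm_eq_abs, abs_of_nonneg (by positivity),
      inv_mul_cancel₀ (norm_ne_zero_iff.mpr hx0)]
  choose fil0 hfil0mem hfil0norm using hfil
  set fil : Module.Dual ℝ V → H := fun ω => if h : ω ∈ Omega hι then fil0 ω h else 0 with hfil'
  have hfilmem : ∀ ω ∈ Omega hι, fil ω ∈ weightSpace ι ω := by
    intro ω hω
    simp only [hfil', dif_pos hω]
    exact hfil0mem ω hω
  have hfilnorm : ∀ ω ∈ Omega hι, ‖fil ω‖ = 1 := by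
    intro ω hω
    simp only [hfil', dif_pos hω]
    exact hfil0norm ω hω
  have hfα : f α = 0 := hΦα
  -- the key variational identity
  have key : ∀ γ' : H, γ' ∈ weightSpace ι α → ‖γ'‖ = 1 →
      ((inner ℂ (∑ ω ∈ Omega hι, (if f ω = 0 then Real.sqrt (r ω) else 0) •
        (if ω = α then γ' else (if f ω = 0 then fil ω else ‖f ω‖⁻¹ • f ω))) (W Φ) : ℂ)).re
        = 0 := by
    intro γ' hγ'mem hγ'1
    set u : Module.Dual ℝ V → H := fun ω =>
      if ω = α then γ' else (if f ω = 0 then fil ω else ‖f ω‖⁻¹ • f ω) with hu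
    have humem : ∀ ω ∈ Omega hι, u ω ∈ weightSpace ι ω := by
      intro ω hω
      simp only [hu]
      rcases eq_or_ne ω α with rfl | h1
      · rw [if_pos rfl]; exact hγ'mem
      · rw [if_neg h1]
        by_cases h2 : f ω = 0
        · rw [if_pos h2]; exact hfilmem ω hω
        · rw [if_neg h2]; exact Submodule.smul_of_tower_mem _ _ (hfmem ω hω)
    have hunorm : ∀ ω ∈ Omega hι, ‖u ω‖ = 1 := by
      intro ω hω
      simp only [hu]
      rcases eq_or_ne ω α with rfl | h1
      · rw [if_pos rfl]; exact hγ'1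
      · rw [if_neg h1]
        by_cases h2 : f ω = 0
        · rw [if_pos h2]; exact hfilnorm ω hω
        · rw [if_neg h2, norm_smul, Real.norm_eq_abs, abs_of_nonneg (by positivity),
            inv_mul_cancel₀ (norm_ne_zero_iff.mpr h2)]
    have hfu : ∀ ω, f ω ≠ 0 → ‖f ω‖ • u ω = f ω := by
      intro ω h2
      have h1 : ω ≠ α := fun h => h2 (h ▸ hfα)
      simp only [hu, if_neg h1, if_neg h2]
      rw [smul_smul, mul_inv_cancel₀ (norm_ne_zero_iff.mpr h2), one_smul]
    set cf : Module.Dual ℝ V → ℝ → ℝ := fun ω s =>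
      if f ω = 0 then s * Real.sqrt (r ω) else Real.sqrt ((1-s^2) * p ω + s^2 * r ω) with hcf
    set Ψ : ℝ → H := fun s => ∑ ω ∈ Omega hι, cf ω s • u ω with hΨ
    set X : H := ∑ ω ∈ Omega hι, (if f ω = 0 then Real.sqrt (r ω) else 0) • u ω with hX
    have hs21 : ∀ s : ℝ, |s| ≤ 1 → s^2 ≤ 1 := by
      intro s hs
      nlinarith [sq_abs s, abs_nonneg s]
    have hrad : ∀ s : ℝ, |s| ≤ 1 → ∀ ω ∈ Omega hι, 0 ≤ (1-s^2) * p ω + s^2 * r ω := by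
      intro s hs ω hω
      have h1 := hs21 s hs
      have h2 := hp0 ω
      have h3 := hr0 ω hω
      nlinarith [sq_nonneg s]
    have hpzero : ∀ ω, f ω = 0 → p ω = 0 := by
      intro ω h0
      simp only [hp, h0, norm_zero]
      ring
    have hcfsq : ∀ s : ℝ, |s| ≤ 1 → ∀ ω ∈ Omega hι,
        (cf ω s)^2 = (1-s^2) * p ω + s^2 * r ω := by
      intro s hs ω hω
      simp only [hcf]
      by_cases h0 : f ω = 0
      · rw [if_pos h0, mul_pow, Real.sq_sqrt (hr0 ω hω), hpzero ω h0]
        ring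
      · rw [if_neg h0]
        exact Real.sq_sqrt (hrad s hs ω hω)
    have hterm : ∀ s : ℝ, |s| ≤ 1 → ∀ ω ∈ Omega hι,
        ‖cf ω s • u ω‖^2 = (1-s^2) * p ω + s^2 * r ω := by
      intro s hs ω hω
      rw [norm_smul, Real.norm_eq_abs, mul_pow, sq_abs, hunorm ω hω, hcfsq s hs ω hω]
      ring
    have h1 : ∀ s : ℝ, |s| ≤ 1 → ‖Ψ s‖ = 1 := by
      intro s hs
      have hsq : ‖Ψ s‖^2 = 1 := by
        rw [hΨ]
        show ‖∑ ω ∈ Omega hι, cf ω s • u ω‖^2 = 1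
        rw [norm_sq_sum_comp hι (fun ω hω => Submodule.smul_of_tower_mem _ _ (humem ω hω)),
          Finset.sum_congr rfl (hterm s hs), Finset.sum_add_distrib,
          ← Finset.mul_sum, ← Finset.mul_sum, hpsum, hrsum]
        ring
      have h5 := congrArg Real.sqrt hsq
      rwa [Real.sqrt_sq (norm_nonneg _), Real.sqrt_one] at h5
    have h2 : ∀ s : ℝ, |s| ≤ 1 → pureDensity ι (Ψ s) = ρ₀ := by
      intro s hs
      apply LinearMap.ext
      intro v
      show expectation (ι v) (Ψ s) = ρ₀ v
      rw [hΨ]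
      show expectation (ι v) (∑ ω ∈ Omega hι, cf ω s • u ω) = ρ₀ v
      rw [expectation_sum_comp hι v (fun ω hω => Submodule.smul_of_tower_mem _ _ (humem ω hω))]
      have hterm2 : ∀ ω ∈ Omega hι,
          ω v * ‖cf ω s • u ω‖^2 = (1-s^2) * (ω v * p ω) + s^2 * (ω v * r ω) := by
        intro ω hω
        rw [hterm s hs ω hω]
        ring
      rw [Finset.sum_congr rfl hterm2, Finset.sum_add_distrib,
        ← Finset.mul_sum, ← Finset.mul_sum, hpρ v, hrρ v]
      ring
    set C : ℝ := ∑ ω ∈ Omega hι, (if f ω = 0 then 0 else |r ω - p ω| / ‖f ω‖) with hC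
    have h3 : ∀ s : ℝ, |s| ≤ 1 → ‖Ψ s - (Φ + s • X)‖ ≤ C * s^2 := by
      intro s hs
      have hsmulX : s • X = ∑ ω ∈ Omega hι,
          (s * (if f ω = 0 then Real.sqrt (r ω) else 0)) • u ω := by
        rw [hX, Finset.smul_sum]
        exact Finset.sum_congr rfl fun ω hω => by rw [smul_smul]
      have hdiff : Ψ s - (Φ + s • X) = ∑ ω ∈ Omega hι,
          ((cf ω s - s * (if f ω = 0 then Real.sqrt (r ω) else 0)) • u ω - f ω) := by
        rw [hΨ, hsmulX]
        conv_lhs => rw [← hfsum]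
        show (∑ ω ∈ Omega hι, cf ω s • u ω) - ((∑ ω ∈ Omega hι, f ω)
          + ∑ ω ∈ Omega hι, (s * (if f ω = 0 then Real.sqrt (r ω) else 0)) • u ω) = _
        rw [← Finset.sum_add_distrib, ← Finset.sum_sub_distrib]
        refine Finset.sum_congr rfl fun ω hω => ?_
        rw [sub_smul]
        abel
      rw [hdiff]
      calc ‖∑ ω ∈ Omega hι, ((cf ω s - s * (if f ω = 0 then Real.sqrt (r ω) else 0)) • u ω - f ω)‖
          ≤ ∑ ω ∈ Omega hι,
            ‖(cf ω s - s * (if f ω = 0 then Real.sqrt (r ω) else 0)) • u ω - f ω‖ :=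
            norm_sum_le _ _
        _ ≤ ∑ ω ∈ Omega hι, (if f ω = 0 then 0 else |r ω - p ω| / ‖f ω‖) * s^2 := by
            refine Finset.sum_le_sum fun ω hω => ?_
            by_cases h0 : f ω = 0
            · have hcf0 : cf ω s = s * Real.sqrt (r ω) := by
                simp only [hcf]
                rw [if_pos h0]
              rw [if_pos h0, if_pos h0, h0, sub_zero, hcf0, sub_self, zero_smul, norm_zero]
              positivity
            · have hcf0 : cf ω s = Real.sqrt ((1-s^2) * p ω + s^2 * r ω) := by
                simp only [hcf]
                rw [if_neg h0]
              rw [if_neg h0, if_neg h0, mul_zero, sub_zero, hcf0]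
              have hfω : f ω = ‖f ω‖ • u ω := (hfu ω h0).symm
              rw [show (Real.sqrt ((1-s^2) * p ω + s^2 * r ω)) • u ω - f ω
                  = (Real.sqrt ((1-s^2) * p ω + s^2 * r ω) - ‖f ω‖) • u ω from by
                rw [sub_smul, ← hfω]]
              rw [norm_smul, Real.norm_eq_abs, hunorm ω hω, mul_one]
              have hpω : 0 < p ω := by
                simp only [hp]
                exact pow_pos (norm_pos_iff.mpr h0) 2
              have hnf : ‖f ω‖ = Real.sqrt (p ω) := by
                simp only [hp]
                exact (Real.sqrt_sq (norm_nonneg _)).symm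
              rw [hnf]
              calc |Real.sqrt ((1-s^2) * p ω + s^2 * r ω) - Real.sqrt (p ω)|
                  ≤ |((1-s^2) * p ω + s^2 * r ω) - p ω| / Real.sqrt (p ω) :=
                    sqrt_sub_sqrt_le (hrad s hs ω hω) hpω
                _ = (|r ω - p ω| / Real.sqrt (p ω)) * s^2 := by
                    rw [show ((1-s^2) * p ω + s^2 * r ω) - p ω = s^2 * (r ω - p ω) from by ring,
                      abs_mul, abs_of_nonneg (sq_nonneg s)]
                    ring
        _ = C * s^2 := by rw [hC, Finset.sum_mul]
    exact variational hW hΦ1 hmin X C Ψ h1 h2 h3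
  -- split off the α term
  set base : H := ∑ ω ∈ (Omega hι).erase α, (if f ω = 0 then Real.sqrt (r ω) else 0) •
      (if f ω = 0 then fil ω else ‖f ω‖⁻¹ • f ω) with hbase
  have hXsplit : ∀ γ' : H, (∑ ω ∈ Omega hι, (if f ω = 0 then Real.sqrt (r ω) else 0) •
      (if ω = α then γ' else (if f ω = 0 then fil ω else ‖f ω‖⁻¹ • f ω)))
      = Real.sqrt (r α) • γ' + base := by
    intro γ'
    rw [← Finset.add_sum_erase _ _ hα]
    congr 1
    · rw [if_pos rfl, if_pos hfα]
    · rw [hbase]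
      exact Finset.sum_congr rfl fun ω hω => by
        rw [if_neg (Finset.ne_of_mem_erase hω)]
  have hrapos : 0 < Real.sqrt (r α) := Real.sqrt_pos.mpr (lt_of_lt_of_le ht0 hrα)
  have expand : ∀ γ' : H, (inner ℂ (Real.sqrt (r α) • γ' + base) (W Φ) : ℂ).re
      = Real.sqrt (r α) * (inner ℂ γ' (W Φ) : ℂ).re + (inner ℂ base (W Φ) : ℂ).re := by
    intro γ'
    rw [inner_add_left, Complex.add_re, inner_real_smul_left, Complex.mul_re]
    simp
  have k1 := key γ hγmem hγ1
  have k2 := key (-γ) (neg_mem hγmem) (by rw [norm_neg, hγ1])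
  have k3 := key (Complex.I • γ) (Submodule.smul_mem _ _ hγmem)
    (by rw [norm_smul, Complex.norm_I, one_mul, hγ1])
  have k4 := key (-(Complex.I • γ)) (neg_mem (Submodule.smul_mem _ _ hγmem))
    (by rw [norm_neg, norm_smul, Complex.norm_I, one_mul, hγ1])
  rw [hXsplit, expand] at k1 k2 k3 k4
  have e2 : (inner ℂ (-γ) (W Φ) : ℂ).re = - (inner ℂ γ (W Φ) : ℂ).re := by
    rw [inner_neg_left]
    simp
  have e3 : (inner ℂ (Complex.I • γ) (W Φ) : ℂ).re = (inner ℂ γ (W Φ) : ℂ).im := by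
    rw [inner_smul_left, Complex.conj_I, Complex.mul_re]
    simp
  have e4 : (inner ℂ (-(Complex.I • γ)) (W Φ) : ℂ).re = - (inner ℂ γ (W Φ) : ℂ).im := by
    rw [inner_neg_left, Complex.neg_re, e3]
  rw [e2] at k2
  rw [e3] at k3
  rw [e4] at k4
  have hre : (inner ℂ γ (W Φ) : ℂ).re = 0 := by
    have h5 : Real.sqrt (r α) * (inner ℂ γ (W Φ) : ℂ).re = 0 := by linarith
    rcases mul_eq_zero.mp h5 with h | h
    · exact absurd h (ne_of_gt hrapos)
    · exact h
  have him : (inner ℂ γ (W Φ) : ℂ).im = 0 := by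
    have h5 : Real.sqrt (r α) * (inner ℂ γ (W Φ) : ℂ).im = 0 := by linarith
    rcases mul_eq_zero.mp h5 with h | h
    · exact absurd h (ne_of_gt hrapos)
    · exact h
  exact Complex.ext hre him

end Helpers

/-- the No-Mixing Lemma, strong form. -/
theorem no_mixing_strong [FiniteDimensional ℝ V] [FiniteDimensional ℂ H] [Nontrivial H]
    (ι : V →ₗ[ℝ] (H →ₗ[ℂ] H)) (W : H →ₗ[ℂ] H)
    (hι : ∀ v : V, (ι v).IsSymmetric) (hW : W.IsSymmetric)
    (habel : ∀ v w : V, ι v ∘ₗ ι w = ι w ∘ₗ ι v)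
    (ρ₀ : Module.Dual ℝ V) (hρ₀ : IsRelInterior (convexHull ℝ (weights ι)) ρ₀)
    (Φ : H) (hΦ : ‖Φ‖ = 1) (hΦρ : pureDensity ι Φ = ρ₀)
    (hmin : ∀ Ψ : H, ‖Ψ‖ = 1 → pureDensity ι Ψ = ρ₀ → expectation W Φ ≤ expectation W Ψ)
    (Γ : H) (hΓ : StronglyOrthogonal ι Γ Φ) :
    (inner ℂ Γ (W Φ) : ℂ) = 0 := by
  classical
  have hdecomp : (inner ℂ Γ (W Φ) : ℂ)
      = ∑ ω ∈ Omega hι, (inner ℂ ((Submodule.orthogonalProjectionOnto (weightSpace ι ω) Γ : H)) (W Φ) : ℂ) := by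
    conv_lhs => rw [← sum_proj hι habel Γ]
    rw [sum_inner]
  rw [hdecomp]
  apply Finset.sum_eq_zero
  intro ω hω
  set g : H := (Submodule.orthogonalProjectionOnto (weightSpace ι ω) Γ : H) with hg
  by_cases hg0 : g = 0
  · rw [hg0, inner_zero_left]
  · set γ' : H := ‖g‖⁻¹ • g with hγ'
    have hmemγ : γ' ∈ weightSpace ι ω :=
      Submodule.smul_of_tower_mem _ _ (Submodule.orthogonalProjectionOnto (weightSpace ι ω) Γ).2
    have hnγ : ‖γ'‖ = 1 := by
      rw [hγ', norm_smul, Real.norm_eq_abs, abs_of_nonneg (by positivity),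
        inv_mul_cancel₀ (norm_ne_zero_iff.mpr hg0)]
    have horth0 : (inner ℂ g ((Submodule.orthogonalProjectionOnto (weightSpace ι ω) Φ : H)) : ℂ) = 0 :=
      hΓ ω (mem_Omega.mp hω)
    have horth : (inner ℂ γ' ((Submodule.orthogonalProjectionOnto (weightSpace ι ω) Φ : H)) : ℂ) = 0 := by
      rw [hγ', inner_real_smul_left, horth0, mul_zero]
    have hgsmul : g = ‖g‖ • γ' := by
      rw [hγ', smul_smul, mul_inv_cancel₀ (norm_ne_zero_iff.mpr hg0), one_smul]
    have hc : (inner ℂ γ' (W Φ) : ℂ) = 0 := by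
      by_cases hΦω : ((Submodule.orthogonalProjectionOnto (weightSpace ι ω) Φ : H)) = 0
      · exact case2 hι habel hW hρ₀ hΦ hΦρ hmin hω hmemγ hnγ hΦω
      · have hre := case1 hι hW hΦ hΦρ hmin hmemγ hnγ horth hΦω
        have hmemγI : Complex.I • γ' ∈ weightSpace ι ω := Submodule.smul_mem _ _ hmemγ
        have hnγI : ‖Complex.I • γ'‖ = 1 := by
          rw [norm_smul, Complex.norm_I, one_mul, hnγ]
        have horthI : (inner ℂ (Complex.I • γ')
            ((Submodule.orthogonalProjectionOnto (weightSpace ι ω) Φ : H)) : ℂ) = 0 := by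
          rw [inner_smul_left, horth, mul_zero]
        have him := case1 hι hW hΦ hΦρ hmin hmemγI hnγI horthI hΦω
        rw [inner_smul_left, Complex.conj_I, Complex.mul_re] at him
        simp only [Complex.neg_re, Complex.neg_im, Complex.I_re, Complex.I_im] at him
        apply Complex.ext hre
        rw [Complex.zero_im]
        linarith
    rw [hgsmul, inner_real_smul_left, hc, mul_zero]

end
end
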